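/- arXiv:1208.5552 — 5 statements merged into one kernel-verified Lean document; each statement's English description precedes it below -/
import Mathlib

section
/- For every δ > 0, T > 0 and ε > 0, the probability P( max_{1 ≤ k ≤ ⌊nT⌋} | n^{-1/2} Σ_{i=1}^{k} ( 1_{γ^n_i ≤ δ/√n} − F^n(δ/√n) ) | > ε ) tends to 0 as n → ∞. Equivalently, defining L̃^n_δ(t) = n^{-1/2} Σ_{i=1}^{⌊nt⌋} ( 1_{γ^n_i ≤ δ/√n} − F^n(δ/√n) ), one has sup_{0 ≤ t ≤ T} |L̃^n_δ(t)| → 0 in probability as n → ∞. -/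
set_option maxHeartbeats 1000000


open MeasureTheory ProbabilityTheory Filter

lemma aux_exists_of_lt_biSup {s : Finset ℕ} {g : ℕ → ℝ} {ε : ℝ} (hε : 0 ≤ ε)
    (h : ε < ⨆ k ∈ s, g k) : ∃ k ∈ s, ε < g k := by
  by_contra hc
  push_neg at hc
  refine absurd h (not_lt.2 (ciSup_le fun k => ?_))
  by_cases hk : k ∈ s
  · rw [ciSup_pos hk]; exact hc k hk
  · haveI : IsEmpty (k ∈ s) := ⟨hk⟩
    rw [Real.iSup_of_isEmpty]; exact hε

lemma aux_sum_incr_ge {X : ℕ → ℝ} {p : ℝ} (hX : ∀ i, -p ≤ X i) {u v : ℕ} (huv : u ≤ v) :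
    (∑ i ∈ Finset.Icc 1 u, X i) - ((v - u : ℕ) : ℝ) * p ≤ ∑ i ∈ Finset.Icc 1 v, X i := by
  have hsub : Finset.Icc 1 u ⊆ Finset.Icc 1 v := Finset.Icc_subset_Icc_right huv
  have hsd := Finset.sum_sdiff (f := X) hsub
  have hcard : (Finset.Icc 1 v \ Finset.Icc 1 u).card = v - u := by
    rw [Finset.card_sdiff_of_subset hsub, Nat.card_Icc, Nat.card_Icc]; omega
  have hge : -(((v - u : ℕ) : ℝ) * p) ≤ ∑ i ∈ Finset.Icc 1 v \ Finset.Icc 1 u, X i := by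
    calc -(((v - u : ℕ) : ℝ) * p) = ∑ _i ∈ Finset.Icc 1 v \ Finset.Icc 1 u, (-p) := by
          rw [Finset.sum_const, hcard, nsmul_eq_mul]; ring
      _ ≤ _ := Finset.sum_le_sum fun i _ => hX i
  linarith

lemma aux_grid {Y : ℕ → ℝ} {pp ε sq : ℝ} {N m B k : ℕ}
    (hY : ∀ i, -pp ≤ Y i) (hp0 : 0 ≤ pp) (hsq0 : 0 < sq)
    (hm0 : 0 < m) (hB : B = N / m + 1)
    (hkN : k ≤ N)
    (hBp : (B : ℝ) * pp ≤ ε * sq / 2)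
    (hlt : ε < |(1 / sq) * ∑ i ∈ Finset.Icc 1 k, Y i|) :
    ∃ j, j < m + 1 ∧ ε * sq / 2 ≤ |∑ i ∈ Finset.Icc 1 (min (j * B) N), Y i| := by
  have hBpos : 0 < B := hB ▸ Nat.succ_pos _
  set j := k / B with hj
  have hmod := Nat.div_add_mod k B
  have hmodlt : k % B < B := Nat.mod_lt _ hBpos
  have hak : j * B ≤ k := Nat.div_mul_le_self k B
  have hsucc : (j + 1) * B = j * B + B := by ring
  have hkb : k < (j + 1) * B := by
    rw [Nat.mul_comm]
    exact Nat.lt_mul_div_succ k hBpos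
  have hNm : N < m * B := by
    rw [hB]
    exact Nat.lt_mul_div_succ N hm0
  have hjm : j < m := by
    rw [hj]
    exact (Nat.div_lt_iff_lt_mul hBpos).2 (lt_of_le_of_lt hkN hNm)
  set b := min ((j + 1) * B) N with hb
  have hkble : k ≤ b := le_min hkb.le hkN
  have hmin : min (j * B) N = j * B := min_eq_left (le_trans hak hkN)
  have hc1 : ((k - j * B : ℕ) : ℝ) ≤ (B : ℝ) := by
    have e1 : j * B = B * j := Nat.mul_comm j B
    have : k - j * B ≤ B := by omega
    exact_mod_cast this
  have hc2 : ((b - k : ℕ) : ℝ) ≤ (B : ℝ) := by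
    have hble : b ≤ (j + 1) * B := min_le_left _ _
    have e1 : j * B = B * j := Nat.mul_comm j B
    have e2 : (j + 1) * B = B * j + B := by ring
    have : b - k ≤ B := by omega
    exact_mod_cast this
  set Sk : ℕ → ℝ := fun r => ∑ i ∈ Finset.Icc 1 r, Y i with hSk
  have h1 : Sk (j * B) - ((k - j * B : ℕ) : ℝ) * pp ≤ Sk k := aux_sum_incr_ge hY hak
  have h2 : Sk k - ((b - k : ℕ) : ℝ) * pp ≤ Sk b := aux_sum_incr_ge hY hkble
  have hlow : -(|Sk (j * B)| + (B : ℝ) * pp) ≤ Sk k := by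
    have := neg_abs_le (Sk (j * B))
    nlinarith
  have hhigh : Sk k ≤ |Sk b| + (B : ℝ) * pp := by
    have := le_abs_self (Sk b)
    nlinarith
  have habs : |Sk k| ≤ max |Sk (j * B)| |Sk b| + (B : ℝ) * pp := by
    rcases abs_cases (Sk k) with ⟨he, _⟩ | ⟨he, _⟩ <;> rw [he]
    · exact le_trans hhigh (by simp [le_max_right, add_le_add_right])
    · have := le_max_left |Sk (j * B)| |Sk b|
      linarith
  have hεsq : ε * sq < |Sk k| := by
    rw [abs_mul, abs_of_pos (by positivity : (0:ℝ) < 1 / sq)] at hlt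
    calc ε * sq < (1 / sq * |Sk k|) * sq := by nlinarith
      _ = |Sk k| := by field_simp
  have hmax : ε * sq / 2 ≤ max |Sk (j * B)| |Sk b| := by linarith
  rcases le_max_iff.1 hmax with h | h
  · exact ⟨j, by omega, by rw [hmin]; exact h⟩
  · exact ⟨j + 1, by omega, h⟩

/-- For iid nonnegative random variables `γ n i` with cdf `F n`,
assuming the diffusion scaling `√n · Fⁿ(x/√n) → f(x)` for a nondecreasing, locally
Lipschitz `f`, the running maximum of the centered indicator sums
`n^{-1/2} Σ_{i=1}^k (1_{γⁿᵢ ≤ δ/√n} − Fⁿ(δ/√n))` over `1 ≤ k ≤ ⌊nT⌋` exceeds `ε`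
with probability tending to `0`. -/
theorem stmt_0
    {Ω : Type*} [MeasurableSpace Ω] (P : Measure Ω) [IsProbabilityMeasure P]
    (γ : ℕ → ℕ → Ω → ℝ)
    (hmeas : ∀ n i, Measurable (γ n i))
    (hnonneg : ∀ n i ω, 0 ≤ γ n i ω)
    (hindep : ∀ n, iIndepFun (γ n) P)
    (hident : ∀ n i j, IdentDistrib (γ n i) (γ n j) P P)
    (F : ℕ → ℝ → ℝ)
    (hF : ∀ n i x, F n x = (P {ω | γ n i ω ≤ x}).toReal)
    (f : ℝ → ℝ)
    (hf_mono : MonotoneOn f (Set.Ici 0))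
    (hf_lip : ∀ T, 0 ≤ T → ∃ K : NNReal, LipschitzOnWith K f (Set.Icc 0 T))
    (hconv : ∀ x, 0 ≤ x →
      Tendsto (fun n : ℕ => Real.sqrt n * F n (x / Real.sqrt n)) atTop (nhds (f x)))
    (δ T ε : ℝ) (hδ : 0 < δ) (hT : 0 < T) (hε : 0 < ε) :
    Tendsto (fun n : ℕ =>
        P {ω | ε < ⨆ k ∈ Finset.Icc 1 ⌊(n : ℝ) * T⌋₊,
          |(1 / Real.sqrt n) * ∑ i ∈ Finset.Icc 1 k,
            ((if γ n i ω ≤ δ / Real.sqrt n then (1 : ℝ) else 0)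
              - F n (δ / Real.sqrt n))|})
      atTop (nhds (0 : ENNReal)) := by
  set m : ℕ := ⌈4 * T * (f δ + 1) / ε⌉₊ + 1 with hm_def
  set Cb : ℝ := 8 * T * (f δ + 1) / ε ^ 2 with hCb_def
  have hm0 : 0 < (m : ℝ) := by positivity
  have hmge : 4 * T * (f δ + 1) / ε ≤ (m : ℝ) := by
    calc 4 * T * (f δ + 1) / ε ≤ (⌈4 * T * (f δ + 1) / ε⌉₊ : ℝ) := Nat.le_ceil _
      _ ≤ (m : ℝ) := by rw [hm_def]; push_cast; linarith
  have hsqrt_top : Tendsto (fun n : ℕ => Real.sqrt n) atTop atTop := by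
    refine tendsto_atTop_atTop.2 fun b => ⟨⌈b * b⌉₊, fun n hn => ?_⟩
    have h1 : b * b ≤ (n : ℝ) := le_trans (Nat.le_ceil _) (by exact_mod_cast hn)
    calc b ≤ |b| := le_abs_self b
      _ = Real.sqrt (b ^ 2) := (Real.sqrt_sq_eq_abs b).symm
      _ ≤ Real.sqrt n := Real.sqrt_le_sqrt (by nlinarith)
  have hbnd0 : Tendsto (fun n : ℕ => ((m + 1 : ℕ) : ENNReal) * ENNReal.ofReal (Cb / Real.sqrt n))
      atTop (nhds 0) := by
    have h1 : Tendsto (fun n : ℕ => Cb / Real.sqrt n) atTop (nhds 0) :=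
      Tendsto.div_atTop tendsto_const_nhds hsqrt_top
    have h2 := ENNReal.tendsto_ofReal h1
    have h3 := ENNReal.Tendsto.const_mul (a := ((m + 1 : ℕ) : ENNReal)) h2
      (Or.inr (ENNReal.natCast_ne_top _))
    simpa using h3
  refine tendsto_of_tendsto_of_tendsto_of_le_of_le' tendsto_const_nhds hbnd0
    (Eventually.of_forall fun n => zero_le) ?_
  have ev2 : ∀ᶠ n : ℕ in atTop, Real.sqrt n * F n (δ / Real.sqrt n) ≤ f δ + 1 :=
    (hconv δ hδ.le).eventually_le_const (by linarith)
  have ev3 : ∀ᶠ n : ℕ in atTop, (4 : ℝ) ≤ ε * Real.sqrt n :=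
    (Tendsto.const_mul_atTop hε hsqrt_top).eventually_ge_atTop 4
  filter_upwards [eventually_ge_atTop 1, ev2, ev3] with n hn1 hn2 hn3
  -- fixed n from here on
  set sq : ℝ := Real.sqrt n with hsq_def
  have hsq0 : 0 < sq := Real.sqrt_pos.2 (by exact_mod_cast hn1)
  have hsq2 : sq * sq = (n : ℝ) := Real.mul_self_sqrt (Nat.cast_nonneg n)
  set c : ℝ := δ / sq with hc_def
  set pp : ℝ := F n c with hpp_def
  set N : ℕ := ⌊(n : ℝ) * T⌋₊ with hN_def
  set B : ℕ := N / m + 1 with hB_def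
  set aa : ℝ := ε * sq / 2 with haa_def
  have haa0 : 0 < aa := by positivity
  set X : ℕ → Ω → ℝ := fun i ω => (if γ n i ω ≤ c then (1 : ℝ) else 0) - pp with hX_def
  set S : ℕ → Ω → ℝ := fun k => ∑ i ∈ Finset.Icc 1 k, X i with hS_def
  have hp0 : 0 ≤ pp := by rw [hpp_def, hF n 0]; exact ENNReal.toReal_nonneg
  have hp1 : pp ≤ 1 := by
    rw [hpp_def, hF n 0]
    have := ENNReal.toReal_mono ENNReal.one_ne_top (prob_le_one (μ := P) (s := {ω | γ n 0 ω ≤ c}))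
    simpa using this
  have hNle : (N : ℝ) ≤ (n : ℝ) * T := Nat.floor_le (by positivity)
  -- per-variable facts
  have hset : ∀ i, MeasurableSet {ω | γ n i ω ≤ c} := fun i => hmeas n i measurableSet_Iic
  have hXmeas : ∀ i, Measurable (X i) := fun i =>
    (Measurable.ite (hset i) measurable_const measurable_const).sub measurable_const
  have hXbd : ∀ i ω, ‖X i ω‖ ≤ 1 := by
    intro i ω
    rw [Real.norm_eq_abs, abs_le]
    constructor <;> (simp only [hX_def]; split_ifs <;> linarith)
  have hXmem : ∀ i, MemLp (X i) 2 P := fun i =>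
    MemLp.of_bound (hXmeas i).aestronglyMeasurable 1 (ae_of_all _ (hXbd i))
  have hXint : ∀ i, Integrable (X i) P := fun i => (hXmem i).integrable one_le_two
  have hind_eq : ∀ i, (fun ω => (if γ n i ω ≤ c then (1 : ℝ) else 0))
      = Set.indicator {ω | γ n i ω ≤ c} (fun _ => (1 : ℝ)) := by
    intro i; ext ω; by_cases h : γ n i ω ≤ c <;> simp [Set.indicator_apply, h]
  have hind_int : ∀ i, Integrable (fun ω => (if γ n i ω ≤ c then (1 : ℝ) else 0)) P := by
    intro i; rw [hind_eq i]; exact (integrable_const (1 : ℝ)).indicator (hset i)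
  have hind_val : ∀ i, ∫ ω, (if γ n i ω ≤ c then (1 : ℝ) else 0) ∂P = pp := by
    intro i
    rw [hind_eq i, integral_indicator_const (1 : ℝ) (hset i), hpp_def, hF n i c]
    simp [Measure.real]
  have hEX : ∀ i, ∫ ω, X i ω ∂P = 0 := by
    intro i
    simp only [hX_def]
    rw [integral_sub (hind_int i) (integrable_const pp), hind_val i, integral_const]
    simp
  have hVarX : ∀ i, variance (X i) P ≤ 2 * pp := by
    intro i
    rw [variance_eq_sub (hXmem i)]
    have h0 : P[X i] = 0 := hEX i
    rw [h0]
    have hpt : ∀ ω, (X i ^ 2) ω ≤ (if γ n i ω ≤ c then (1 : ℝ) else 0) + pp ^ 2 := by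
      intro ω
      simp only [Pi.pow_apply, hX_def]
      split_ifs <;> nlinarith
    have hle : P[X i ^ 2] ≤ ∫ ω, ((if γ n i ω ≤ c then (1 : ℝ) else 0) + pp ^ 2) ∂P :=
      integral_mono (hXmem i).integrable_sq ((hind_int i).add (integrable_const _)) hpt
    have heq : ∫ ω, ((if γ n i ω ≤ c then (1 : ℝ) else 0) + pp ^ 2) ∂P = pp + pp ^ 2 := by
      rw [integral_add (hind_int i) (integrable_const _), hind_val i, integral_const]; simp
    rw [heq] at hle
    nlinarith
  have hpair : ∀ i j, i ≠ j → IndepFun (X i) (X j) P := by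
    intro i j hij
    have hφ : Measurable (fun x : ℝ => (if x ≤ c then (1 : ℝ) else 0) - pp) :=
      (Measurable.ite measurableSet_Iic measurable_const measurable_const).sub measurable_const
    exact ((hindep n).indepFun hij).comp hφ hφ
  -- sums
  have hSmem : ∀ k, MemLp (S k) 2 P := fun k => memLp_finset_sum' _ (fun i _ => hXmem i)
  have hES : ∀ k, P[S k] = 0 := by
    intro k
    have h1 : S k = fun ω => ∑ i ∈ Finset.Icc 1 k, X i ω := by
      ext ω; simp [hS_def, Finset.sum_apply]
    rw [h1, integral_finset_sum _ (fun i _ => hXint i)]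
    simp [hEX]
  have hSvar : ∀ k, k ≤ N → variance (S k) P ≤ 2 * N * pp := by
    intro k hk
    rw [hS_def, IndepFun.variance_sum (fun i _ => hXmem i) (fun i _ j _ hij => hpair i j hij)]
    calc ∑ i ∈ Finset.Icc 1 k, variance (X i) P ≤ ∑ _i ∈ Finset.Icc 1 k, 2 * pp :=
          Finset.sum_le_sum fun i _ => hVarX i
      _ = (k : ℝ) * (2 * pp) := by rw [Finset.sum_const, nsmul_eq_mul, Nat.card_Icc]; norm_num
      _ ≤ (N : ℝ) * (2 * pp) := by
          have : (k : ℝ) ≤ N := by exact_mod_cast hk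
          nlinarith
      _ = 2 * N * pp := by ring
  -- the key numeric inequalities
  have hfδ1 : 0 ≤ f δ + 1 := le_trans (by positivity) hn2
  have hBle : (B : ℝ) ≤ (N : ℝ) / (m : ℝ) + 1 := by
    have hNd : ((N / m : ℕ) : ℝ) ≤ (N : ℝ) / (m : ℝ) := Nat.cast_div_le
    have hcast : (B : ℝ) = ((N / m : ℕ) : ℝ) + 1 := by exact_mod_cast congrArg (Nat.cast : ℕ → ℝ) hB_def
    rw [hcast]
    linarith
  have h3 : 4 * T * (f δ + 1) ≤ ε * (m : ℝ) := by
    rw [div_le_iff₀ hε] at hmge; linarith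
  have hBp : (B : ℝ) * pp ≤ ε * sq / 2 := by
    have key : ((N : ℝ) / (m : ℝ) + 1) * pp ≤ ε * sq / 2 := by
      rw [div_add' _ _ _ hm0.ne', div_mul_eq_mul_div, div_le_iff₀ hm0]
      have a1 : (N : ℝ) * pp ≤ (n : ℝ) * T * pp := mul_le_mul_of_nonneg_right hNle hp0
      have a2 : (n : ℝ) * T * pp = T * sq * (sq * pp) := by rw [← hsq2]; ring
      have a3 : T * sq * (sq * pp) ≤ T * sq * (f δ + 1) :=
        mul_le_mul_of_nonneg_left hn2 (by positivity)
      have a4 : (4 * T * (f δ + 1)) * sq ≤ (ε * (m : ℝ)) * sq :=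
        mul_le_mul_of_nonneg_right h3 hsq0.le
      have a5 : pp * (m : ℝ) ≤ (m : ℝ) := by nlinarith
      have a6 : 4 * (m : ℝ) ≤ ε * sq * (m : ℝ) := mul_le_mul_of_nonneg_right hn3 hm0.le
      nlinarith
    calc (B : ℝ) * pp ≤ ((N : ℝ) / (m : ℝ) + 1) * pp := mul_le_mul_of_nonneg_right hBle hp0
      _ ≤ ε * sq / 2 := key
  have hfrac : 2 * N * pp / aa ^ 2 ≤ Cb / sq := by
    rw [haa_def, hCb_def, div_le_div_iff₀ (by positivity) hsq0]
    have b1 : (N : ℝ) * (sq * pp) ≤ ((n : ℝ) * T) * (sq * pp) :=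
      mul_le_mul_of_nonneg_right hNle (by positivity)
    have b2 : ((n : ℝ) * T) * (sq * pp) ≤ ((n : ℝ) * T) * (f δ + 1) :=
      mul_le_mul_of_nonneg_left hn2 (by positivity)
    have expand : 8 * T * (f δ + 1) / ε ^ 2 * (ε * sq / 2) ^ 2 = 2 * T * (f δ + 1) * (sq * sq) := by
      field_simp; ring
    rw [expand, hsq2]
    nlinarith
  -- Chebyshev per grid point
  have hcheb : ∀ g : ℕ, g ≤ N → P {ω | aa ≤ |S g ω|} ≤ ENNReal.ofReal (Cb / sq) := by
    intro g hg
    have h := meas_ge_le_variance_div_sq (hSmem g) haa0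
    rw [hES g] at h
    simp only [sub_zero] at h
    refine le_trans h (ENNReal.ofReal_le_ofReal ?_)
    refine le_trans ?_ hfrac
    gcongr
    exact hSvar g hg
  -- inclusion into grid union
  have hsub : {ω | ε < ⨆ k ∈ Finset.Icc 1 N,
        |(1 / sq) * ∑ i ∈ Finset.Icc 1 k, ((if γ n i ω ≤ c then (1 : ℝ) else 0) - pp)|}
      ⊆ ⋃ j ∈ Finset.range (m + 1), {ω | aa ≤ |S (min (j * B) N) ω|} := by
    intro ω hω
    obtain ⟨k, hk, hklt⟩ := aux_exists_of_lt_biSup hε.le hω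
    have hkN : k ≤ N := (Finset.mem_Icc.1 hk).2
    have hY : ∀ i, -pp ≤ (fun i => X i ω) i := by
      intro i; simp only [hX_def]; split_ifs <;> linarith
    obtain ⟨j, hjm, hge⟩ := aux_grid (Y := fun i => X i ω) hY hp0 hsq0
      (by omega : 0 < m) hB_def hkN hBp hklt
    refine Set.mem_biUnion (Finset.mem_range.2 hjm) ?_
    show aa ≤ |S (min (j * B) N) ω|
    have : S (min (j * B) N) ω = ∑ i ∈ Finset.Icc 1 (min (j * B) N), X i ω := by
      simp [hS_def, Finset.sum_apply]
    rw [this]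
    exact hge
  calc P {ω | ε < ⨆ k ∈ Finset.Icc 1 N,
        |(1 / sq) * ∑ i ∈ Finset.Icc 1 k, ((if γ n i ω ≤ c then (1 : ℝ) else 0) - pp)|}
      ≤ P (⋃ j ∈ Finset.range (m + 1), {ω | aa ≤ |S (min (j * B) N) ω|}) := measure_mono hsub
    _ ≤ ∑ j ∈ Finset.range (m + 1), P {ω | aa ≤ |S (min (j * B) N) ω|} :=
        measure_biUnion_finset_le _ _
    _ ≤ ∑ _j ∈ Finset.range (m + 1), ENNReal.ofReal (Cb / sq) :=
        Finset.sum_le_sum fun j _ => hcheb _ (min_le_right _ _)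
    _ = ((m + 1 : ℕ) : ENNReal) * ENNReal.ofReal (Cb / sq) := by
        rw [Finset.sum_const, Finset.card_range, nsmul_eq_mul]
end

section
/- Let c > 0, let g : [0,∞) → ℝ be nondecreasing and Lipschitz continuous with g(0) = 0, and let y : [0,∞) → ℝ be càdlàg. Then there exists a unique càdlàg function x : [0,∞) → ℝ such that for all t ≥ 0, x(t) = y(t) + c ∫_0^t (x(s))⁻ ds − ∫_0^t g((x(s))⁺) ds, where the integrals are Lebesgue integrals. -/
open Filter MeasureTheory

/-- A function `y : [0,∞) → ℝ` (encoded on all of `ℝ`, with only its values on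
`[0,∞)` relevant) is càdlàg: right-continuous at every `t ≥ 0` and with a finite
left limit at every `t > 0`. -/
def Cadlag (y : ℝ → ℝ) : Prop :=
  (∀ t : ℝ, 0 ≤ t → ContinuousWithinAt y (Set.Ici t) t) ∧
  (∀ t : ℝ, 0 < t → ∃ l : ℝ, Tendsto y (nhdsWithin t (Set.Iio t)) (nhds l))

/-- Locally bounded (in the two-sided sense). -/
def LocBdd (G : ℝ → ℝ) : Prop :=
  ∀ T : ℝ, 0 ≤ T → ∃ B, 0 ≤ B ∧ ∀ s : ℝ, |s| ≤ T → |G s| ≤ B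

/-- Interval-integrability from measurability plus a bound on `uIoc`. -/
lemma II_of_bounded {G : ℝ → ℝ} (hG : Measurable G) {a b C : ℝ}
    (hC : ∀ s ∈ Set.uIoc a b, |G s| ≤ C) : IntervalIntegrable G volume a b := by
  rw [intervalIntegrable_iff]
  refine Integrable.mono' (g := fun _ => C) (integrableOn_const ?_)
    hG.aestronglyMeasurable ?_
  · rw [Set.uIoc]; exact measure_Ioc_lt_top.ne
  · refine (ae_restrict_iff' measurableSet_uIoc).2 (Eventually.of_forall fun s hs => ?_)
    simpa [Real.norm_eq_abs] using hC s hs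

lemma LocBdd.intervalIntegrable {G : ℝ → ℝ} (hG : Measurable G) (h : LocBdd G) (a b : ℝ) :
    IntervalIntegrable G volume a b := by
  obtain ⟨B, _, hB⟩ := h (max |a| |b|) (le_max_of_le_left (abs_nonneg a))
  refine II_of_bounded hG fun s hs => hB s ?_
  rcases le_total a b with hab | hab
  · rw [Set.uIoc_of_le hab] at hs
    rw [abs_le]
    constructor
    · have h1 := neg_abs_le a
      have h2 := le_max_left |a| |b|
      linarith [hs.1]
    · have h1 := le_abs_self b
      have h2 := le_max_right |a| |b|
      linarith [hs.2]
  · rw [Set.uIoc_of_ge hab] at hs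
    rw [abs_le]
    constructor
    · have h1 := neg_abs_le b
      have h2 := le_max_right |a| |b|
      linarith [hs.1]
    · have h1 := le_abs_self a
      have h2 := le_max_left |a| |b|
      linarith [hs.2]

private lemma abs_aux {a b : ℝ} (h : dist a b < 1) : |a| ≤ |b| + 1 := by
  rw [Real.dist_eq] at h
  have := abs_sub_abs_le_abs_sub a b
  linarith

/-- A càdlàg function is bounded on `[0, T]`. -/
lemma cadlag_bounded {u : ℝ → ℝ} (hu : Cadlag u) (T : ℝ) :
    ∃ B : ℝ, 0 ≤ B ∧ ∀ t ∈ Set.Icc (0:ℝ) T, |u t| ≤ B := by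
  have key : ∀ t ∈ Set.Icc (0:ℝ) T, ∃ U : Set ℝ, U ∈ nhds t ∧
      ∃ C : ℝ, ∀ s ∈ U ∩ Set.Ici (0:ℝ), |u s| ≤ C := by
    intro t ht
    obtain ⟨δ₁, hδ₁, h1⟩ := (Metric.continuousWithinAt_iff.1 (hu.1 t ht.1)) 1 one_pos
    rcases lt_or_ge 0 t with htpos | htnonpos
    · obtain ⟨l, hl⟩ := hu.2 t htpos
      obtain ⟨δ₂, hδ₂, h2⟩ := (Metric.tendsto_nhdsWithin_nhds.1 hl) 1 one_pos
      refine ⟨Set.Ioo (t - δ₂) (t + δ₁), Ioo_mem_nhds (by linarith) (by linarith),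
        max (|u t| + 1) (|l| + 1), fun s hs => ?_⟩
      have hs1 := hs.1.1
      have hs2 := hs.1.2
      rcases le_or_gt t s with hts | hst
      · have hd : dist s t < δ₁ := by
          rw [Real.dist_eq, abs_of_nonneg (by linarith)]; linarith
        exact le_trans (abs_aux (h1 hts hd)) (le_max_left _ _)
      · have hd : dist s t < δ₂ := by
          rw [Real.dist_eq, abs_of_nonpos (by linarith)]; linarith
        exact le_trans (abs_aux (h2 hst hd)) (le_max_right _ _)
    · have ht0 : t = 0 := le_antisymm htnonpos ht.1
      refine ⟨Set.Ioo (t - 1) (t + δ₁), Ioo_mem_nhds (by linarith) (by linarith),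
        |u t| + 1, fun s hs => ?_⟩
      have hts : t ≤ s := ht0 ▸ hs.2
      have hs2 := hs.1.2
      have hd : dist s t < δ₁ := by
        rw [Real.dist_eq, abs_of_nonneg (by linarith)]; linarith
      exact abs_aux (h1 hts hd)
  choose! U hU C hC using key
  obtain ⟨F, hF⟩ := isCompact_Icc.elim_nhds_subcover' (fun t _ => U t)
    (fun t ht => hU t ht)
  refine ⟨∑ x ∈ F, max (C x) 0, Finset.sum_nonneg fun _ _ => le_max_right _ _, fun t ht => ?_⟩
  obtain ⟨x, hxF, hxU⟩ := Set.mem_iUnion₂.1 (hF ht)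
  calc |u t| ≤ C x := hC x x.2 t ⟨hxU, ht.1⟩
    _ ≤ max (C x) 0 := le_max_left _ _
    _ ≤ ∑ x ∈ F, max (C x) 0 := by
        apply Finset.single_le_sum (f := fun (x : ↑(Set.Icc (0:ℝ) T)) => max (C ↑x) 0)
          (fun i _ => le_max_right _ _) hxF

/-- A càdlàg function, stopped below `0`, is locally bounded. -/
lemma cadlag_locBdd {u : ℝ → ℝ} (hu : Cadlag u) : LocBdd (fun s => u (max s 0)) := by
  intro T hT
  obtain ⟨B, hB0, hB⟩ := cadlag_bounded hu T
  exact ⟨B, hB0, fun s hs =>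
    hB _ ⟨le_max_right _ _, max_le (le_trans (le_abs_self s) hs) hT⟩⟩

/-- A càdlàg function, stopped below `0`, is measurable. -/
lemma cadlag_measurable {u : ℝ → ℝ} (hu : Cadlag u) :
    Measurable (fun t : ℝ => u (max t 0)) := by
  have happrox : ∀ n : ℕ,
      Measurable (fun t : ℝ => u (max ((⌈t * 2 ^ n⌉ : ℝ) / 2 ^ n) 0)) := by
    intro n
    exact (measurable_from_top (f := fun k : ℤ => u (max ((k : ℝ) / 2 ^ n) 0))).comp
      ((measurable_id.mul_const (2 ^ n)).ceil)
  refine measurable_of_tendsto_metrizable happrox (tendsto_pi_nhds.2 fun t => ?_)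
  set a : ℕ → ℝ := fun n => (⌈t * 2 ^ n⌉ : ℝ) / 2 ^ n with ha
  have hpow : ∀ n : ℕ, (0:ℝ) < 2 ^ n := fun n => by positivity
  have hge : ∀ n, t ≤ a n := fun n => by
    rw [ha, le_div_iff₀ (hpow n)]
    exact Int.le_ceil _
  have hlt : ∀ n, a n ≤ t + (1 / 2) ^ n := fun n => by
    rw [ha, div_le_iff₀ (hpow n)]
    have := (Int.ceil_lt_add_one (t * 2 ^ n)).le
    have h2 : ((1:ℝ) / 2) ^ n * 2 ^ n = 1 := by
      rw [← mul_pow]; norm_num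
    nlinarith [hpow n]
  have hta : Tendsto a atTop (nhds t) := by
    have h1 : Tendsto (fun n : ℕ => t + (1 / 2 : ℝ) ^ n) atTop (nhds (t + 0)) :=
      tendsto_const_nhds.add (tendsto_pow_atTop_nhds_zero_of_lt_one (by norm_num) (by norm_num))
    rw [add_zero] at h1
    exact tendsto_of_tendsto_of_tendsto_of_le_of_le tendsto_const_nhds h1 hge hlt
  rcases le_or_gt 0 t with ht0 | ht0
  · have hmax : ∀ n, max (a n) 0 = a n := fun n => max_eq_left (le_trans ht0 (hge n))
    have hmaxt : max t 0 = t := max_eq_left ht0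
    simp only [hmax, hmaxt]
    have htaw : Tendsto a atTop (nhdsWithin t (Set.Ici t)) := by
      rw [tendsto_nhdsWithin_iff]
      exact ⟨hta, Eventually.of_forall hge⟩
    exact ((hu.1 t ht0).tendsto.comp htaw).congr fun n => congrArg u (hmax n).symm
  · have hev : ∀ᶠ n in atTop, a n < 0 := hta.eventually (eventually_lt_nhds ht0)
    have hmaxt : max t 0 = 0 := max_eq_right ht0.le
    rw [hmaxt]
    refine Tendsto.congr' ?_ (tendsto_const_nhds (x := u 0))
    filter_upwards [hev] with n hn
    rw [max_eq_right hn.le]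

/-- The key iteration bound for Picard-type arguments. -/
lemma picard_bound {L M T : ℝ} (hL : 0 ≤ L)
    (u : ℕ → ℝ → ℝ)
    (humeas : ∀ n, Measurable (u n))
    (hubdd : ∀ n, ∃ B, ∀ s ∈ Set.Icc (0:ℝ) T, |u n s| ≤ B)
    (hbase : ∀ t ∈ Set.Icc (0:ℝ) T, |u 0 t| ≤ M)
    (hstep : ∀ n, ∀ t ∈ Set.Icc (0:ℝ) T, |u (n+1) t| ≤ ∫ s in (0:ℝ)..t, L * |u n s|) :
    ∀ n, ∀ t ∈ Set.Icc (0:ℝ) T, |u n t| ≤ M * L ^ n * t ^ n / n.factorial := by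
  intro n
  induction n with
  | zero => intro t ht; simpa using hbase t ht
  | succ n ih =>
    intro t ht
    have ht0 : (0:ℝ) ≤ t := ht.1
    have hsub : Set.Icc (0:ℝ) t ⊆ Set.Icc (0:ℝ) T := Set.Icc_subset_Icc le_rfl ht.2
    obtain ⟨B, hB⟩ := hubdd n
    have hII : IntervalIntegrable (fun s => L * |u n s|) volume 0 t := by
      refine II_of_bounded ((humeas n).abs.const_mul L) (C := L * B) fun s hs => ?_
      have hs' : s ∈ Set.Icc (0:ℝ) t := by
        rw [Set.uIoc_of_le ht0] at hs; exact ⟨hs.1.le, hs.2⟩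
      have h1 := hB s (hsub hs')
      have h2 := abs_nonneg (u n s)
      rw [abs_of_nonneg (by positivity)]
      exact mul_le_mul_of_nonneg_left h1 hL
    have hII2 : IntervalIntegrable (fun s => L * (M * L ^ n * s ^ n / n.factorial))
        volume 0 t := (Continuous.intervalIntegrable (by continuity) _ _)
    have hmono : (∫ s in (0:ℝ)..t, L * |u n s|) ≤
        ∫ s in (0:ℝ)..t, L * (M * L ^ n * s ^ n / n.factorial) := by
      refine intervalIntegral.integral_mono_on ht0 hII hII2 fun s hs => ?_
      exact mul_le_mul_of_nonneg_left (ih s (hsub hs)) hL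
    have hcomp : (∫ s in (0:ℝ)..t, L * (M * L ^ n * s ^ n / n.factorial))
        = M * L ^ (n+1) * t ^ (n+1) / (n+1).factorial := by
      have heq : (∫ s in (0:ℝ)..t, L * (M * L ^ n * s ^ n / n.factorial))
          = (L * (M * L ^ n / n.factorial)) * ∫ s in (0:ℝ)..t, s ^ n := by
        rw [← intervalIntegral.integral_const_mul]
        congr 1; ext s; ring
      rw [heq, integral_pow]
      have hfac : ((n+1).factorial : ℝ) = (n+1) * n.factorial := by
        rw [Nat.factorial_succ]; push_cast; ring
      have hnf : (n.factorial : ℝ) ≠ 0 := by positivity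
      have hn1 : ((n:ℝ)+1) ≠ 0 := by positivity
      field_simp [hfac]
      rw [hfac, zero_pow (Nat.succ_ne_zero n)]
      ring
    calc |u (n+1) t| ≤ ∫ s in (0:ℝ)..t, L * |u n s| := hstep n t ht
      _ ≤ _ := hmono
      _ = _ := hcomp

set_option maxHeartbeats 1000000 in
/-- For `c > 0`, `g` nondecreasing Lipschitz with `g(0) = 0`, and
`y` càdlàg, there is a unique càdlàg `x` with
`x(t) = y(t) + c ∫₀ᵗ x(s)⁻ ds − ∫₀ᵗ g(x(s)⁺) ds` for all `t ≥ 0`. -/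
theorem stmt_2 (c : ℝ) (hc : 0 < c) (g : ℝ → ℝ)
    (hg_mono : MonotoneOn g (Set.Ici 0))
    (hg_lip : ∃ K : NNReal, LipschitzOnWith K g (Set.Ici 0))
    (hg0 : g 0 = 0)
    (y : ℝ → ℝ) (hy : Cadlag y) :
    ∃ x : ℝ → ℝ,
      (Cadlag x ∧ ∀ t, 0 ≤ t →
        x t = y t + c * (∫ s in (0 : ℝ)..t, max (-(x s)) 0)
              - ∫ s in (0 : ℝ)..t, g (max (x s) 0)) ∧
      ∀ x' : ℝ → ℝ,
        (Cadlag x' ∧ ∀ t, 0 ≤ t →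
          x' t = y t + c * (∫ s in (0 : ℝ)..t, max (-(x' s)) 0)
                - ∫ s in (0 : ℝ)..t, g (max (x' s) 0)) →
        ∀ t, 0 ≤ t → x' t = x t := by
  classical
  obtain ⟨K, hK⟩ := hg_lip
  set L : ℝ := c + K with hLdef
  have hL0 : 0 ≤ L := by positivity
  set f : ℝ → ℝ := fun u => c * max (-u) 0 - g (max u 0) with hfdef
  -- Lipschitz/continuity facts about the vector field
  have hgc : LipschitzWith K (fun u : ℝ => g (max u 0)) := by
    refine LipschitzWith.of_dist_le_mul fun a b => ?_
    have h1 : dist (g (max a 0)) (g (max b 0)) ≤ K * dist (max a 0) (max b 0) :=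
      hK.dist_le_mul _ (Set.mem_Ici.2 (le_max_right _ _)) _ (Set.mem_Ici.2 (le_max_right _ _))
    have h2 : dist (max a 0) (max b 0) ≤ dist a b := by
      rw [Real.dist_eq, Real.dist_eq]; exact abs_max_sub_max_le_abs a b 0
    calc dist (g (max a 0)) (g (max b 0)) ≤ K * dist (max a 0) (max b 0) := h1
      _ ≤ K * dist a b := mul_le_mul_of_nonneg_left h2 K.coe_nonneg
  have hfc : Continuous f := by
    apply Continuous.sub
    · exact continuous_const.mul (continuous_neg.max continuous_const)
    · exact hgc.continuous
  have hf_lip : ∀ a b : ℝ, |f a - f b| ≤ L * |a - b| := by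
    intro a b
    have h1 : |max (-a) 0 - max (-b) 0| ≤ |a - b| := by
      have h := abs_max_sub_max_le_abs (-a) (-b) 0
      calc |max (-a) 0 - max (-b) 0| ≤ |(-a) - (-b)| := h
        _ = |a - b| := by rw [← abs_neg]; ring_nf
    have h2 : |g (max a 0) - g (max b 0)| ≤ K * |a - b| := by
      have h := hgc.dist_le_mul a b
      rw [Real.dist_eq, Real.dist_eq] at h
      exact h
    have h3 : f a - f b = c * (max (-a) 0 - max (-b) 0) - (g (max a 0) - g (max b 0)) := by
      simp only [hfdef]; ring
    calc |f a - f b|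
        ≤ |c * (max (-a) 0 - max (-b) 0)| + |g (max a 0) - g (max b 0)| := by
          rw [h3]; exact abs_sub _ _
      _ = c * |max (-a) 0 - max (-b) 0| + |g (max a 0) - g (max b 0)| := by
          rw [abs_mul, abs_of_pos hc]
      _ ≤ c * |a - b| + K * |a - b| := by
          have := mul_le_mul_of_nonneg_left h1 hc.le
          linarith
      _ = L * |a - b| := by rw [hLdef]; ring
  have hf0 : f 0 = 0 := by simp [hfdef, hg0]
  have hf_abs : ∀ a : ℝ, |f a| ≤ L * |a| := by
    intro a
    have := hf_lip a 0
    simpa [hf0] using this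
  -- the stopped version of y
  set Y : ℝ → ℝ := fun t => y (max t 0) with hYdef
  have hYmeas : Measurable Y := cadlag_measurable hy
  have hYloc : LocBdd Y := cadlag_locBdd hy
  have hYeq : ∀ t : ℝ, 0 ≤ t → Y t = y t := fun t ht => by
    simp only [hYdef, max_eq_left ht]
  -- the Picard iterates
  let z : ℕ → ℝ → ℝ := fun n => Nat.rec (fun _ => (0:ℝ))
    (fun _ zn => fun t => ∫ s in (0:ℝ)..t, f (zn s + Y s)) n
  have hz0 : ∀ t, z 0 t = 0 := fun _ => rfl
  have hzs : ∀ n t, z (n+1) t = ∫ s in (0:ℝ)..t, f (z n s + Y s) := fun _ _ => rfl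
  have hz : ∀ n : ℕ, Measurable (z n) ∧ LocBdd (z n) := by
    intro n
    induction n with
    | zero =>
      refine ⟨measurable_const, fun T hT => ⟨0, le_rfl, fun s _ => ?_⟩⟩
      simp [hz0]
    | succ n ih =>
      have hGmeas : Measurable (fun s => f (z n s + Y s)) :=
        hfc.measurable.comp (ih.1.add hYmeas)
      have hGloc : LocBdd (fun s => f (z n s + Y s)) := by
        intro T hT
        obtain ⟨B1, hB10, hB1⟩ := ih.2 T hT
        obtain ⟨B2, hB20, hB2⟩ := hYloc T hT
        refine ⟨L * (B1 + B2), by positivity, fun s hs => ?_⟩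
        refine le_trans (hf_abs _) ?_
        have h1 := hB1 s hs
        have h2 := hB2 s hs
        have h3 := abs_add_le (z n s) (Y s)
        nlinarith
      have hGII := hGloc.intervalIntegrable hGmeas
      constructor
      · have hcont : Continuous (z (n+1)) := by
          have := intervalIntegral.continuous_primitive hGII 0
          exact this
        exact hcont.measurable
      · intro T hT
        obtain ⟨B, hB0, hB⟩ := hGloc T hT
        refine ⟨B * T, by positivity, fun t ht => ?_⟩
        rw [hzs]
        have hbound : ∀ s ∈ Set.uIoc (0:ℝ) t, ‖f (z n s + Y s)‖ ≤ B := by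
          intro s hs
          rw [Real.norm_eq_abs]
          refine hB s ?_
          rcases le_total 0 t with h | h
          · rw [Set.uIoc_of_le h] at hs
            rw [abs_of_pos hs.1]
            exact le_trans hs.2 (le_trans (le_abs_self t) ht)
          · rw [Set.uIoc_of_ge h] at hs
            rw [abs_of_nonpos hs.2]
            have := hs.1
            have h4 := neg_abs_le t
            have h5 : |t| ≤ T := ht
            linarith
        have := intervalIntegral.norm_integral_le_of_norm_le_const hbound
        rw [Real.norm_eq_abs] at this
        refine le_trans this ?_
        have : |t - 0| ≤ T := by simpa using ht
        nlinarith
  have hGmeas : ∀ n, Measurable (fun s => f (z n s + Y s)) := fun n =>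
    hfc.measurable.comp ((hz n).1.add hYmeas)
  have hGloc : ∀ n, LocBdd (fun s => f (z n s + Y s)) := by
    intro n T hT
    obtain ⟨B1, hB10, hB1⟩ := (hz n).2 T hT
    obtain ⟨B2, hB20, hB2⟩ := hYloc T hT
    refine ⟨L * (B1 + B2), by positivity, fun s hs => ?_⟩
    refine le_trans (hf_abs _) ?_
    have h1 := hB1 s hs
    have h2 := hB2 s hs
    have h3 := abs_add_le (z n s) (Y s)
    nlinarith
  -- the key estimate
  have hest : ∀ T : ℝ, 0 ≤ T → ∃ M, 0 ≤ M ∧ ∀ n, ∀ t ∈ Set.Icc (0:ℝ) T,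
      |z (n+1) t - z n t| ≤ M * L ^ n * t ^ n / n.factorial := by
    intro T hT
    obtain ⟨BY, hBY0, hBY⟩ := hYloc T hT
    have habs_of_Icc : ∀ s : ℝ, s ∈ Set.Icc (0:ℝ) T → |s| ≤ T := by
      intro s hs; rw [abs_of_nonneg hs.1]; exact hs.2
    refine ⟨L * BY * T, by positivity, ?_⟩
    refine picard_bound hL0 (fun n t => z (n+1) t - z n t) ?_ ?_ ?_ ?_
    · exact fun n => ((hz (n+1)).1.sub (hz n).1)
    · intro n
      obtain ⟨B1, _, hB1⟩ := (hz (n+1)).2 T hT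
      obtain ⟨B2, _, hB2⟩ := (hz n).2 T hT
      refine ⟨B1 + B2, fun s hs => ?_⟩
      have := abs_sub (z (n+1) s) (z n s)
      have h1 := hB1 s (habs_of_Icc s hs)
      have h2 := hB2 s (habs_of_Icc s hs)
      linarith
    · intro t ht
      have hz1 : z (0+1) t - z 0 t = ∫ s in (0:ℝ)..t, f (z 0 s + Y s) := by
        rw [hzs, hz0, sub_zero]
      show |z (0+1) t - z 0 t| ≤ L * BY * T
      rw [hz1]
      have hbound : ∀ s ∈ Set.uIoc (0:ℝ) t, ‖f (z 0 s + Y s)‖ ≤ L * BY := by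
        intro s hs
        rw [Set.uIoc_of_le ht.1] at hs
        have hsT : |s| ≤ T := by
          rw [abs_of_pos hs.1]; exact le_trans hs.2 ht.2
        rw [Real.norm_eq_abs, hz0, zero_add]
        refine le_trans (hf_abs _) ?_
        exact mul_le_mul_of_nonneg_left (hBY s hsT) hL0
      have h := intervalIntegral.norm_integral_le_of_norm_le_const hbound
      rw [Real.norm_eq_abs] at h
      refine le_trans h ?_
      have h2 : |t - 0| ≤ T := by rw [sub_zero, abs_of_nonneg ht.1]; exact ht.2
      nlinarith [mul_nonneg hL0 hBY0]
    · intro n t ht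
      have hdiff : z (n+1+1) t - z (n+1) t
          = ∫ s in (0:ℝ)..t, (f (z (n+1) s + Y s) - f (z n s + Y s)) := by
        rw [hzs (n+1), hzs n]
        exact (intervalIntegral.integral_sub (hGloc (n+1) |>.intervalIntegrable (hGmeas (n+1)) 0 t)
          ((hGloc n).intervalIntegrable (hGmeas n) 0 t)).symm
      show |z (n+1+1) t - z (n+1) t| ≤ ∫ s in (0:ℝ)..t, L * |z (n+1) s - z n s|
      rw [hdiff]
      have hIIdiff : IntervalIntegrable
          (fun s => |f (z (n+1) s + Y s) - f (z n s + Y s)|) volume 0 t := by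
        obtain ⟨B1, _, hB1⟩ := hGloc (n+1) T hT
        obtain ⟨B2, _, hB2⟩ := hGloc n T hT
        refine II_of_bounded ((hGmeas (n+1)).sub (hGmeas n)).abs (C := B1 + B2) fun s hs => ?_
        rw [Set.uIoc_of_le ht.1] at hs
        have hsT : |s| ≤ T := by rw [abs_of_pos hs.1]; exact le_trans hs.2 ht.2
        rw [abs_abs]
        have := abs_sub (f (z (n+1) s + Y s)) (f (z n s + Y s))
        have h1 := hB1 s hsT
        have h2 := hB2 s hsT
        simp only [Pi.sub_apply] at h1 h2 ⊢
        linarith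
      have hIIL : IntervalIntegrable (fun s => L * |z (n+1) s - z n s|) volume 0 t := by
        obtain ⟨B1, _, hB1⟩ := (hz (n+1)).2 T hT
        obtain ⟨B2, _, hB2⟩ := (hz n).2 T hT
        refine II_of_bounded (((hz (n+1)).1.sub (hz n).1).abs.const_mul L)
          (C := L * (B1 + B2)) fun s hs => ?_
        rw [Set.uIoc_of_le ht.1] at hs
        have hsT : |s| ≤ T := by rw [abs_of_pos hs.1]; exact le_trans hs.2 ht.2
        have h1 := hB1 s hsT
        have h2 := hB2 s hsT
        have h3 := abs_sub (z (n+1) s) (z n s)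
        have h4 : |z (n+1) s - z n s| ≥ 0 := abs_nonneg _
        rw [abs_of_nonneg (by positivity)]
        simp only [Pi.sub_apply]
        nlinarith
      calc |∫ s in (0:ℝ)..t, (f (z (n+1) s + Y s) - f (z n s + Y s))|
          ≤ ∫ s in (0:ℝ)..t, |f (z (n+1) s + Y s) - f (z n s + Y s)| :=
            intervalIntegral.abs_integral_le_integral_abs ht.1
        _ ≤ ∫ s in (0:ℝ)..t, L * |z (n+1) s - z n s| := by
            refine intervalIntegral.integral_mono_on ht.1 hIIdiff hIIL fun s _ => ?_
            have := hf_lip (z (n+1) s + Y s) (z n s + Y s)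
            have heq : z (n+1) s + Y s - (z n s + Y s) = z (n+1) s - z n s := by ring
            rwa [heq] at this
  -- convergence of the iterates
  have hconv : ∀ t : ℝ, ∃ l, Tendsto (fun n => z n (max t 0)) atTop (nhds l) := by
    intro t
    set t0 : ℝ := max t 0 with ht0def
    have ht00 : 0 ≤ t0 := le_max_right _ _
    obtain ⟨M, hM0, hMest⟩ := hest t0 ht00
    have hcauchy : CauchySeq (fun n => z n t0) := by
      refine cauchySeq_of_dist_le_of_summable (fun n => M * (L * t0) ^ n / n.factorial)
        (fun n => ?_) ?_
      · rw [Real.dist_eq, abs_sub_comm]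
        show |z (n+1) t0 - z n t0| ≤ M * (L * t0) ^ n / n.factorial
        have heq : M * (L * t0) ^ n / (n.factorial : ℝ) = M * L ^ n * t0 ^ n / n.factorial := by
          rw [mul_pow]; ring
        rw [heq]
        exact hMest n t0 ⟨ht00, le_rfl⟩

      · have := (Real.summable_pow_div_factorial (L * t0)).mul_left M
        simpa [mul_div_assoc] using this
    exact cauchySeq_tendsto_of_complete hcauchy
  choose w hw using hconv
  have hwmeas : Measurable w :=
    measurable_of_tendsto_metrizable
      (fun n => (hz n).1.comp (measurable_id.max measurable_const))
      (tendsto_pi_nhds.2 hw)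
  have hweq : ∀ t : ℝ, 0 ≤ t → Tendsto (fun n => z n t) atTop (nhds (w t)) := by
    intro t ht
    have := hw t
    rwa [max_eq_left ht] at this
  -- uniform bound on the iterates
  have hzunif : ∀ T : ℝ, 0 ≤ T → ∃ B, 0 ≤ B ∧ ∀ n, ∀ t ∈ Set.Icc (0:ℝ) T, |z n t| ≤ B := by
    intro T hT
    obtain ⟨M, hM0, hMest⟩ := hest T hT
    have hsummable := (Real.summable_pow_div_factorial (L * T)).mul_left M
    refine ⟨∑' k : ℕ, M * ((L * T) ^ k / k.factorial), tsum_nonneg fun k => by positivity, ?_⟩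
    intro n t ht
    have htel : z n t = ∑ k ∈ Finset.range n, (z (k+1) t - z k t) := by
      rw [Finset.sum_range_sub (fun k => z k t), hz0, sub_zero]
    rw [htel]
    refine le_trans (Finset.abs_sum_le_sum_abs _ _) ?_
    refine le_trans (Finset.sum_le_sum (g := fun k => M * ((L * T) ^ k / k.factorial))
      fun k _ => ?_) ?_
    · refine le_trans (hMest k t ht) ?_
      show M * L ^ k * t ^ k / (k.factorial : ℝ) ≤ M * ((L * T) ^ k / k.factorial)
      have heq : M * L ^ k * t ^ k / (k.factorial : ℝ) = M * ((L * t) ^ k / k.factorial) := by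
        rw [mul_pow]; ring
      rw [heq]
      have h1 : (L * t) ^ k ≤ (L * T) ^ k :=
        pow_le_pow_left₀ (mul_nonneg hL0 ht.1) (mul_le_mul_of_nonneg_left ht.2 hL0) k
      have h2 : (0:ℝ) < k.factorial := by positivity
      apply mul_le_mul_of_nonneg_left _ hM0
      exact div_le_div_of_nonneg_right h1 h2.le
    · exact Summable.sum_le_tsum _ (fun k _ => by positivity) hsummable
  have hwloc : LocBdd w := by
    intro T hT
    obtain ⟨B, hB0, hB⟩ := hzunif T hT
    refine ⟨B, hB0, fun s hs => ?_⟩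
    have hmem : max s 0 ∈ Set.Icc (0:ℝ) T :=
      ⟨le_max_right _ _, max_le (le_trans (le_abs_self s) hs) hT⟩
    exact le_of_tendsto (hw s).abs (Eventually.of_forall fun n => hB n _ hmem)
  -- the limit integrand
  have hHmeas : Measurable (fun s => f (w s + Y s)) := hfc.measurable.comp (hwmeas.add hYmeas)
  have hHloc : LocBdd (fun s => f (w s + Y s)) := by
    intro T hT
    obtain ⟨B1, hB10, hB1⟩ := hwloc T hT
    obtain ⟨B2, hB20, hB2⟩ := hYloc T hT
    refine ⟨L * (B1 + B2), by positivity, fun s hs => ?_⟩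
    refine le_trans (hf_abs _) ?_
    have h1 := hB1 s hs
    have h2 := hB2 s hs
    have h3 := abs_add_le (w s) (Y s)
    nlinarith
  have hHII : ∀ a b : ℝ, IntervalIntegrable (fun s => f (w s + Y s)) volume a b :=
    hHloc.intervalIntegrable hHmeas
  -- the fixed-point property
  have hfix : ∀ t : ℝ, 0 ≤ t → w t = ∫ s in (0:ℝ)..t, f (w s + Y s) := by
    intro t ht
    have h1 : Tendsto (fun n => z (n+1) t) atTop (nhds (w t)) :=
      (hweq t ht).comp (tendsto_add_atTop_nat 1)
    have h2 : Tendsto (fun n => ∫ s in (0:ℝ)..t, f (z n s + Y s)) atTop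
        (nhds (∫ s in (0:ℝ)..t, f (w s + Y s))) := by
      obtain ⟨B, hB0, hB⟩ := hzunif t ht
      obtain ⟨BY, hBY0, hBY⟩ := hYloc t ht
      refine intervalIntegral.tendsto_integral_filter_of_dominated_convergence
        (fun _ => L * (B + BY))
        (Eventually.of_forall fun n => (hGmeas n).aestronglyMeasurable)
        (Eventually.of_forall fun n => (ae_of_all _ fun s hs => ?_))
        intervalIntegrable_const
        (ae_of_all _ fun s hs => ?_)
      · rw [Set.uIoc_of_le ht] at hs
        have hsT : |s| ≤ t := by rw [abs_of_pos hs.1]; exact hs.2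
        rw [Real.norm_eq_abs]
        refine le_trans (hf_abs _) ?_
        have h3 := hB n s ⟨hs.1.le, hs.2⟩
        have h4 := hBY s hsT
        have h5 := abs_add_le (z n s) (Y s)
        exact mul_le_mul_of_nonneg_left (by linarith) hL0
      · rw [Set.uIoc_of_le ht] at hs
        exact (hfc.tendsto _).comp ((hweq s hs.1.le).add tendsto_const_nhds)
    have h1' : Tendsto (fun n => ∫ s in (0:ℝ)..t, f (z n s + Y s)) atTop (nhds (w t)) := by
      refine Tendsto.congr (fun n => ?_) h1
      rw [hzs]
    exact tendsto_nhds_unique h1' h2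
  -- the solution
  set x : ℝ → ℝ := fun t => w t + Y t with hxdef
  have hxmeas : Measurable x := hwmeas.add hYmeas
  have hxloc : LocBdd x := by
    intro T hT
    obtain ⟨B1, hB10, hB1⟩ := hwloc T hT
    obtain ⟨B2, hB20, hB2⟩ := hYloc T hT
    refine ⟨B1 + B2, by positivity, fun s hs => ?_⟩
    have h3 := abs_add_le (w s) (Y s)
    have h1 := hB1 s hs
    have h2 := hB2 s hs
    calc |x s| = |w s + Y s| := rfl
      _ ≤ B1 + B2 := by linarith
  -- integrability of the two pieces for any locally bounded measurable function
  have hpieces : ∀ X : ℝ → ℝ, Measurable X → LocBdd X → ∀ t : ℝ,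
      IntervalIntegrable (fun s => max (-(X s)) 0) volume 0 t ∧
      IntervalIntegrable (fun s => g (max (X s) 0)) volume 0 t := by
    intro X hXm hXl t
    constructor
    · refine LocBdd.intervalIntegrable (hXm.neg.max measurable_const) ?_ 0 t
      intro T hT
      obtain ⟨B, hB0, hB⟩ := hXl T hT
      refine ⟨B, hB0, fun s hs => ?_⟩
      have h1 := hB s hs
      have h2 : max (-(X s)) 0 ≤ |X s| := by
        apply max_le _ (abs_nonneg _)
        rw [← abs_neg]; exact le_abs_self _
      rw [abs_of_nonneg (le_max_right _ _)]
      simp only [Pi.neg_apply]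
      linarith
    · refine LocBdd.intervalIntegrable (hgc.continuous.measurable.comp hXm) ?_ 0 t
      intro T hT
      obtain ⟨B, hB0, hB⟩ := hXl T hT
      refine ⟨K * B, by positivity, fun s hs => ?_⟩
      have h1 := hB s hs
      have h2 : dist (g (max (X s) 0)) (g (max (0:ℝ) 0)) ≤ K * dist (X s) 0 :=
        hgc.dist_le_mul (X s) 0
      rw [Real.dist_eq, Real.dist_eq, sub_zero] at h2
      have h3 : g (max (0:ℝ) 0) = 0 := by simp [hg0]
      rw [h3, sub_zero] at h2
      refine le_trans h2 ?_
      exact mul_le_mul_of_nonneg_left h1 K.coe_nonneg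
  -- splitting the integral of f ∘ X
  have hsplit : ∀ X : ℝ → ℝ, Measurable X → LocBdd X → ∀ t : ℝ, 0 ≤ t →
      (∫ s in (0:ℝ)..t, f (X s))
        = c * (∫ s in (0:ℝ)..t, max (-(X s)) 0) - ∫ s in (0:ℝ)..t, g (max (X s) 0) := by
    intro X hXm hXl t ht
    obtain ⟨hA, hB⟩ := hpieces X hXm hXl t
    calc (∫ s in (0:ℝ)..t, f (X s))
        = ∫ s in (0:ℝ)..t, (c * max (-(X s)) 0 - g (max (X s) 0)) := rfl
      _ = (∫ s in (0:ℝ)..t, c * max (-(X s)) 0) - ∫ s in (0:ℝ)..t, g (max (X s) 0) :=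
          intervalIntegral.integral_sub (hA.const_mul c) hB
      _ = c * (∫ s in (0:ℝ)..t, max (-(X s)) 0) - ∫ s in (0:ℝ)..t, g (max (X s) 0) := by
          rw [intervalIntegral.integral_const_mul]
  -- x satisfies the equation
  have heqn : ∀ t, 0 ≤ t →
      x t = y t + c * (∫ s in (0 : ℝ)..t, max (-(x s)) 0)
            - ∫ s in (0 : ℝ)..t, g (max (x s) 0) := by
    intro t ht
    have h1 : x t = (∫ s in (0:ℝ)..t, f (x s)) + y t := by
      have : (fun s => f (w s + Y s)) = fun s => f (x s) := rfl
      rw [hxdef]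
      show w t + Y t = _
      rw [hfix t ht, hYeq t ht, ← this]
    rw [h1, hsplit x hxmeas hxloc t ht]
    ring
  -- x is càdlàg
  have hPcont : Continuous (fun r => ∫ s in (0:ℝ)..r, f (w s + Y s)) :=
    intervalIntegral.continuous_primitive hHII 0
  have hxcad : Cadlag x := by
    constructor
    · intro t ht
      apply ContinuousWithinAt.add
      · refine (hPcont.continuousWithinAt).congr (fun s hs => ?_) ?_
        · exact hfix s (le_trans ht hs)
        · exact hfix t ht
      · exact (hy.1 t ht).congr (fun s hs => hYeq s (le_trans ht hs)) (hYeq t ht)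
    · intro t ht
      obtain ⟨l, hl⟩ := hy.2 t ht
      refine ⟨(∫ s in (0:ℝ)..t, f (w s + Y s)) + l, ?_⟩
      have hev : ∀ᶠ s in nhdsWithin t (Set.Iio t), 0 < s :=
        eventually_nhdsWithin_of_eventually_nhds (eventually_gt_nhds ht)
      have hwP : Tendsto w (nhdsWithin t (Set.Iio t))
          (nhds (∫ s in (0:ℝ)..t, f (w s + Y s))) := by
        refine Tendsto.congr' ?_ ((hPcont.tendsto t).mono_left nhdsWithin_le_nhds)
        filter_upwards [hev] with s hs
        exact (hfix s hs.le).symm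
      have hYl : Tendsto Y (nhdsWithin t (Set.Iio t)) (nhds l) := by
        refine Tendsto.congr' ?_ hl
        filter_upwards [hev] with s hs
        exact (hYeq s hs.le).symm
      exact hwP.add hYl
  -- uniqueness
  have huniq : ∀ x₁ x₂ : ℝ → ℝ, Cadlag x₁ → Cadlag x₂ →
      (∀ t, 0 ≤ t → x₁ t = y t + c * (∫ s in (0 : ℝ)..t, max (-(x₁ s)) 0)
        - ∫ s in (0 : ℝ)..t, g (max (x₁ s) 0)) →
      (∀ t, 0 ≤ t → x₂ t = y t + c * (∫ s in (0 : ℝ)..t, max (-(x₂ s)) 0)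
        - ∫ s in (0 : ℝ)..t, g (max (x₂ s) 0)) →
      ∀ t, 0 ≤ t → x₁ t = x₂ t := by
    intro x₁ x₂ h₁ h₂ e₁ e₂
    set X₁ : ℝ → ℝ := fun s => x₁ (max s 0) with hX₁def
    set X₂ : ℝ → ℝ := fun s => x₂ (max s 0) with hX₂def
    have hX₁m : Measurable X₁ := cadlag_measurable h₁
    have hX₂m : Measurable X₂ := cadlag_measurable h₂
    have hX₁l : LocBdd X₁ := cadlag_locBdd h₁
    have hX₂l : LocBdd X₂ := cadlag_locBdd h₂
    have hXeq : ∀ (x₀ : ℝ → ℝ),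
        (∀ t, 0 ≤ t → x₀ t = y t + c * (∫ s in (0 : ℝ)..t, max (-(x₀ s)) 0)
          - ∫ s in (0 : ℝ)..t, g (max (x₀ s) 0)) →
        Measurable (fun s => x₀ (max s 0)) → LocBdd (fun s => x₀ (max s 0)) →
        ∀ t, 0 ≤ t → x₀ t = y t + ∫ s in (0:ℝ)..t, f (x₀ (max s 0)) := by
      intro x₀ e₀ hm hlb t ht
      have hcongr1 : (∫ s in (0:ℝ)..t, max (-(x₀ s)) 0)
          = ∫ s in (0:ℝ)..t, max (-(x₀ (max s 0))) 0 := by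
        refine intervalIntegral.integral_congr fun s hs => ?_
        rw [Set.uIcc_of_le ht] at hs
        rw [max_eq_left hs.1]
      have hcongr2 : (∫ s in (0:ℝ)..t, g (max (x₀ s) 0))
          = ∫ s in (0:ℝ)..t, g (max ((x₀ (max s 0))) 0) := by
        refine intervalIntegral.integral_congr fun s hs => ?_
        rw [Set.uIcc_of_le ht] at hs
        rw [max_eq_left hs.1]
      rw [e₀ t ht, hcongr1, hcongr2, hsplit _ hm hlb t ht]
      ring
    have hE : ∀ t, 0 ≤ t → X₁ t - X₂ t = ∫ s in (0:ℝ)..t, (f (X₁ s) - f (X₂ s)) := by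
      intro t ht
      have hfX₁m : Measurable (fun s => f (X₁ s)) := hfc.measurable.comp hX₁m
      have hfX₂m : Measurable (fun s => f (X₂ s)) := hfc.measurable.comp hX₂m
      have hfX₁l : LocBdd (fun s => f (X₁ s)) := by
        intro T hT
        obtain ⟨B, hB0, hB⟩ := hX₁l T hT
        exact ⟨L * B, by positivity, fun s hs => le_trans (hf_abs _)
          (mul_le_mul_of_nonneg_left (hB s hs) hL0)⟩
      have hfX₂l : LocBdd (fun s => f (X₂ s)) := by
        intro T hT
        obtain ⟨B, hB0, hB⟩ := hX₂l T hT
        exact ⟨L * B, by positivity, fun s hs => le_trans (hf_abs _)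
          (mul_le_mul_of_nonneg_left (hB s hs) hL0)⟩
      have hX₁t : X₁ t = x₁ t := by rw [hX₁def]; simp [max_eq_left ht]
      have hX₂t : X₂ t = x₂ t := by rw [hX₂def]; simp [max_eq_left ht]
      rw [intervalIntegral.integral_sub (hfX₁l.intervalIntegrable hfX₁m 0 t)
        (hfX₂l.intervalIntegrable hfX₂m 0 t)]
      rw [hX₁t, hX₂t, hXeq x₁ e₁ hX₁m hX₁l t ht, hXeq x₂ e₂ hX₂m hX₂l t ht]
      ring
    intro t₀ ht₀
    -- run the Picard bound with constant sequence
    obtain ⟨B₁, hB₁0, hB₁⟩ := hX₁l t₀ ht₀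
    obtain ⟨B₂, hB₂0, hB₂⟩ := hX₂l t₀ ht₀
    have habs_of_Icc : ∀ s : ℝ, s ∈ Set.Icc (0:ℝ) t₀ → |s| ≤ t₀ := by
      intro s hs; rw [abs_of_nonneg hs.1]; exact hs.2
    have hkey : ∀ n : ℕ, |X₁ t₀ - X₂ t₀|
        ≤ (B₁ + B₂) * L ^ n * t₀ ^ n / n.factorial := by
      intro n
      refine picard_bound hL0 (fun _ s => X₁ s - X₂ s) (fun _ => hX₁m.sub hX₂m)
        (fun _ => ⟨B₁ + B₂, fun s hs => ?_⟩) (fun s hs => ?_) ?_ n t₀ ⟨ht₀, le_rfl⟩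
      · have h1 := hB₁ s (habs_of_Icc s hs)
        have h2 := hB₂ s (habs_of_Icc s hs)
        have := abs_sub (X₁ s) (X₂ s)
        linarith
      · have h1 := hB₁ s (habs_of_Icc s hs)
        have h2 := hB₂ s (habs_of_Icc s hs)
        have := abs_sub (X₁ s) (X₂ s)
        linarith
      · intro n t ht
        show |X₁ t - X₂ t| ≤ ∫ s in (0:ℝ)..t, L * |X₁ s - X₂ s|
        rw [hE t ht.1]
        have hIIdiff : IntervalIntegrable (fun s => |f (X₁ s) - f (X₂ s)|) volume 0 t := by
          refine II_of_bounded (G := fun s => |f (X₁ s) - f (X₂ s)|)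
            ((hfc.measurable.comp hX₁m).sub (hfc.measurable.comp hX₂m)).abs
            (C := L * B₁ + L * B₂) fun s hs => ?_
          rw [Set.uIoc_of_le ht.1] at hs
          have hsT : |s| ≤ t₀ := by rw [abs_of_pos hs.1]; exact le_trans hs.2 ht.2
          rw [abs_abs]
          have h0 := abs_sub (f (X₁ s)) (f (X₂ s))
          have h1 := le_trans (hf_abs (X₁ s)) (mul_le_mul_of_nonneg_left (hB₁ s hsT) hL0)
          have h2 := le_trans (hf_abs (X₂ s)) (mul_le_mul_of_nonneg_left (hB₂ s hsT) hL0)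
          linarith
        have hIIL : IntervalIntegrable (fun s => L * |X₁ s - X₂ s|) volume 0 t := by
          refine II_of_bounded ((hX₁m.sub hX₂m).abs.const_mul L) (C := L * (B₁ + B₂))
            fun s hs => ?_
          rw [Set.uIoc_of_le ht.1] at hs
          have hsT : |s| ≤ t₀ := by rw [abs_of_pos hs.1]; exact le_trans hs.2 ht.2
          have h1 := hB₁ s hsT
          have h2 := hB₂ s hsT
          have h3 := abs_sub (X₁ s) (X₂ s)
          rw [abs_of_nonneg (by positivity)]
          simp only [Pi.sub_apply]
          nlinarith
        calc |∫ s in (0:ℝ)..t, (f (X₁ s) - f (X₂ s))|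
            ≤ ∫ s in (0:ℝ)..t, |f (X₁ s) - f (X₂ s)| :=
              intervalIntegral.abs_integral_le_integral_abs ht.1
          _ ≤ ∫ s in (0:ℝ)..t, L * |X₁ s - X₂ s| := by
              refine intervalIntegral.integral_mono_on ht.1 hIIdiff hIIL fun s _ => ?_
              exact hf_lip (X₁ s) (X₂ s)
    have hzero : Tendsto (fun n : ℕ => (B₁ + B₂) * L ^ n * t₀ ^ n / n.factorial)
        atTop (nhds 0) := by
      have h1 := (Real.summable_pow_div_factorial (L * t₀)).tendsto_atTop_zero.const_mul
        (B₁ + B₂)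
      rw [mul_zero] at h1
      refine Tendsto.congr (fun n => ?_) h1
      rw [mul_pow]; ring
    have hle : |X₁ t₀ - X₂ t₀| ≤ 0 := ge_of_tendsto' hzero hkey
    have : X₁ t₀ = X₂ t₀ := by
      have := abs_nonneg (X₁ t₀ - X₂ t₀)
      have h0 : |X₁ t₀ - X₂ t₀| = 0 := le_antisymm hle this
      have := abs_eq_zero.1 h0
      linarith
    have hX₁t : X₁ t₀ = x₁ t₀ := by rw [hX₁def]; simp [max_eq_left ht₀]
    have hX₂t : X₂ t₀ = x₂ t₀ := by rw [hX₂def]; simp [max_eq_left ht₀]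
    rw [← hX₁t, ← hX₂t, this]
  exact ⟨x, ⟨hxcad, heqn⟩, fun x' hx' t ht => huniq x' x hx'.1 hxcad hx'.2 heqn t ht⟩
end

section
/- Let c > 0, let g : [0,∞) → ℝ be nondecreasing and Lipschitz continuous with g(0) = 0 and g(u) ≤ c·u for all u ≥ 0, and let y : [0,∞) → ℝ be càdlàg. Suppose the càdlàg function x : [0,∞) → ℝ satisfies x(t) = y(t) + c ∫_0^t (x(s))⁻ ds − ∫_0^t g((x(s))⁺) ds for all t ≥ 0, and the càdlàg function z : [0,∞) → ℝ satisfies z(t) = y(t) − c ∫_0^t z(s) ds for all t ≥ 0. Then x(t) ≥ z(t) for all t ≥ 0. -/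
open Filter MeasureTheory

lemma measurable_of_rightCont {f : ℝ → ℝ}
    (hf : ∀ t : ℝ, ContinuousWithinAt f (Set.Ici t) t) : Measurable f := by
  have key : ∀ n : ℕ, Measurable (fun t : ℝ => f ((⌈t * 2^n⌉ : ℤ) / 2^n)) := by
    intro n
    exact (measurable_of_countable (fun k : ℤ => f ((k : ℝ) / 2^n))).comp
      (Int.measurable_ceil.comp (measurable_id.mul_const _))
  refine measurable_of_tendsto_metrizable key ?_
  rw [tendsto_pi_nhds]
  intro t
  have hpow : ∀ n : ℕ, (0:ℝ) < 2^n := fun n => by positivity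
  have hge : ∀ n : ℕ, t ≤ (⌈t * 2^n⌉ : ℝ) / 2^n := by
    intro n
    rw [le_div_iff₀ (hpow n)]
    exact Int.le_ceil _
  have hle : ∀ n : ℕ, (⌈t * 2^n⌉ : ℝ) / 2^n ≤ t + 1 / 2^n := by
    intro n
    rw [div_le_iff₀ (hpow n)]
    have := (Int.ceil_lt_add_one (t * 2^n)).le
    calc (⌈t * 2^n⌉ : ℝ) ≤ t * 2^n + 1 := this
    _ = (t + 1/2^n) * 2^n := by field_simp
  have htend : Tendsto (fun n : ℕ => (⌈t * 2^n⌉ : ℝ) / 2^n) atTop (nhds t) := by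
    refine tendsto_of_tendsto_of_tendsto_of_le_of_le (g := fun _ => t)
      (h := fun n : ℕ => t + 1 / 2^n) tendsto_const_nhds ?_ hge hle
    have : Tendsto (fun n : ℕ => (1:ℝ) / 2^n) atTop (nhds 0) := by
      simpa using tendsto_pow_atTop_nhds_zero_of_lt_one (by norm_num : (0:ℝ) ≤ 1/2)
        (by norm_num : (1:ℝ)/2 < 1) |>.congr (fun n => by rw [div_pow, one_pow, one_div])
    simpa using tendsto_const_nhds.add this
  exact (hf t).tendsto.comp (tendsto_nhdsWithin_of_tendsto_nhds_of_eventually_within _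
    htend (Eventually.of_forall hge))

lemma cadlag_bdd {f : ℝ → ℝ}
    (hf : (∀ t : ℝ, 0 ≤ t → ContinuousWithinAt f (Set.Ici t) t) ∧
      (∀ t : ℝ, 0 < t → ∃ l : ℝ, Tendsto f (nhdsWithin t (Set.Iio t)) (nhds l)))
    (T : ℝ) : ∃ M : ℝ, ∀ s ∈ Set.Icc (0:ℝ) T, |f s| ≤ M := by
  have hcomp : IsCompact (Set.Icc (0:ℝ) T) := isCompact_Icc
  refine hcomp.induction_on (p := fun u => ∃ M : ℝ, ∀ s ∈ u, |f s| ≤ M) ⟨0, by simp⟩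
    (fun u v huv ⟨M, hM⟩ => ⟨M, fun s hs => hM s (huv hs)⟩)
    (fun u v ⟨M, hM⟩ ⟨N, hN⟩ => ⟨max M N, fun s hs => hs.elim
      (fun h => (hM s h).trans (le_max_left _ _))
      (fun h => (hN s h).trans (le_max_right _ _))⟩) ?_
  intro t ht
  -- bound on the right of t
  have hR : ∀ᶠ s in nhdsWithin t (Set.Ici t), |f s| ≤ |f t| + 1 := by
    have := (hf.1 t ht.1).tendsto
    have : ∀ᶠ s in nhdsWithin t (Set.Ici t), |f s - f t| < 1 := by
      have := Metric.tendsto_nhds.mp this 1 one_pos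
      simpa [Real.dist_eq] using this
    filter_upwards [this] with s hs
    have := abs_sub_abs_le_abs_sub (f s) (f t)
    linarith
  rcases eq_or_lt_of_le ht.1 with h0 | h0
  · -- t = 0 : only the right matters
    have hsub : nhdsWithin t (Set.Icc 0 T) ≤ nhdsWithin t (Set.Ici t) :=
      nhdsWithin_mono _ (fun s hs => by simpa [← h0] using hs.1)
    refine ⟨_, hsub hR, |f t| + 1, fun s hs => hs⟩
  · -- t > 0 : combine left and right
    obtain ⟨l, hl⟩ := hf.2 t h0
    have hL : ∀ᶠ s in nhdsWithin t (Set.Iio t), |f s| ≤ |l| + 1 := by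
      have : ∀ᶠ s in nhdsWithin t (Set.Iio t), |f s - l| < 1 := by
        have := Metric.tendsto_nhds.mp hl 1 one_pos
        simpa [Real.dist_eq] using this
      filter_upwards [this] with s hs
      have := abs_sub_abs_le_abs_sub (f s) l
      linarith
    have hall : ∀ᶠ s in nhds t, |f s| ≤ max (|f t| + 1) (|l| + 1) := by
      have h1 : ∀ᶠ s in nhdsWithin t (Set.Ici t), |f s| ≤ max (|f t| + 1) (|l| + 1) := by
        filter_upwards [hR] with s hs; exact hs.trans (le_max_left _ _)
      have h2 : ∀ᶠ s in nhdsWithin t (Set.Iio t), |f s| ≤ max (|f t| + 1) (|l| + 1) := by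
        filter_upwards [hL] with s hs; exact hs.trans (le_max_right _ _)
      have : ∀ᶠ s in nhdsWithin t (Set.Ici t) ⊔ nhdsWithin t (Set.Iio t),
          |f s| ≤ max (|f t| + 1) (|l| + 1) := eventually_sup.mpr ⟨h1, h2⟩
      have huniv : Set.Ici t ∪ Set.Iio t = Set.univ := by
        ext u; by_cases h : t ≤ u <;> simp [h, lt_of_not_ge, Set.mem_Ici, Set.mem_Iio] <;> omega
      rwa [← nhdsWithin_union, huniv, nhdsWithin_univ] at this
    have : ∀ᶠ s in nhdsWithin t (Set.Icc 0 T), |f s| ≤ max (|f t| + 1) (|l| + 1) :=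
      nhdsWithin_le_nhds hall
    exact ⟨_, this, _, fun s hs => hs⟩

lemma II_of_bdd {f : ℝ → ℝ} (hm : Measurable f) {a b M : ℝ}
    (hM : ∀ s ∈ Set.uIcc a b, |f s| ≤ M) : IntervalIntegrable f volume a b := by
  refine (intervalIntegrable_const (c := M)).mono_fun' hm.aestronglyMeasurable ?_
  refine (ae_restrict_iff' measurableSet_uIoc).mpr (Eventually.of_forall fun s hs => ?_)
  simpa [Real.norm_eq_abs] using hM s (Set.Ioc_subset_Icc_self hs)

/-- Comparison: if `x` solves
`x(t) = y(t) + c ∫₀ᵗ x(s)⁻ ds − ∫₀ᵗ g(x(s)⁺) ds` with `g(u) ≤ c·u` on `[0,∞)`,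
and `z` solves `z(t) = y(t) − c ∫₀ᵗ z(s) ds`, then `x ≥ z` on `[0,∞)`. -/
theorem stmt_3 (c : ℝ) (hc : 0 < c) (g : ℝ → ℝ)
    (hg_mono : MonotoneOn g (Set.Ici 0))
    (hg_lip : ∃ K : NNReal, LipschitzOnWith K g (Set.Ici 0))
    (hg0 : g 0 = 0)
    (hg_le : ∀ u, 0 ≤ u → g u ≤ c * u)
    (y : ℝ → ℝ) (hy : Cadlag y)
    (x : ℝ → ℝ) (hx : Cadlag x)
    (hxeq : ∀ t, 0 ≤ t →
      x t = y t + c * (∫ s in (0 : ℝ)..t, max (-(x s)) 0)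
            - ∫ s in (0 : ℝ)..t, g (max (x s) 0))
    (z : ℝ → ℝ) (hz : Cadlag z)
    (hzeq : ∀ t, 0 ≤ t → z t = y t - c * ∫ s in (0 : ℝ)..t, z s) :
    ∀ t, 0 ≤ t → z t ≤ x t := by
  obtain ⟨K, hK⟩ := hg_lip
  set xb : ℝ → ℝ := fun t => x (max t 0) with hxb
  set zb : ℝ → ℝ := fun t => z (max t 0) with hzb
  -- right continuity of the truncated versions
  have hmaxc : ∀ (f : ℝ → ℝ), Cadlag f → ∀ t : ℝ,
      ContinuousWithinAt (fun s => f (max s 0)) (Set.Ici t) t := by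
    intro f hf t
    have h1 := hf.1 (max t 0) (le_max_right _ _)
    have h2 : ContinuousWithinAt (fun s : ℝ => max s 0) (Set.Ici t) t :=
      (continuous_id.max continuous_const).continuousWithinAt
    have h3 : Set.MapsTo (fun s : ℝ => max s 0) (Set.Ici t) (Set.Ici (max t 0)) :=
      fun s hs => max_le_max (Set.mem_Ici.mp hs) le_rfl
    exact ContinuousWithinAt.comp (g := f) (f := fun s : ℝ => max s 0) h1 h2 h3
  have hxbm : Measurable xb := measurable_of_rightCont (hmaxc x hx)
  have hzbm : Measurable zb := measurable_of_rightCont (hmaxc z hz)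
  -- the truncated g
  have hg'c : Continuous (fun u : ℝ => g (max u 0)) :=
    hK.continuousOn.comp_continuous (continuous_id.max continuous_const)
      (fun u => le_max_right u 0)
  have hg'b : ∀ u : ℝ, |g (max u 0)| ≤ K * |u| := by
    intro u
    have h1 : dist (g (max u 0)) (g 0) ≤ K * dist (max u 0) 0 :=
      hK.dist_le_mul _ (le_max_right u 0) 0 Set.self_mem_Ici
    rw [hg0, Real.dist_eq, Real.dist_eq, sub_zero, sub_zero] at h1
    refine h1.trans (mul_le_mul_of_nonneg_left ?_ K.2)
    rw [abs_of_nonneg (le_max_right u 0)]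
    exact max_le (le_abs_self u) (abs_nonneg u)
  -- uniform bounds on compact intervals
  have bnd : ∀ (f : ℝ → ℝ), Cadlag f → ∀ a b : ℝ, ∃ M, 0 ≤ M ∧
      ∀ s ∈ Set.uIcc a b, |f (max s 0)| ≤ M := by
    intro f hf a b
    obtain ⟨M, hM⟩ := cadlag_bdd hf (max (max a b) 0)
    refine ⟨max M 0, le_max_right _ _, fun s hs => ?_⟩
    have hs2 : s ≤ max a b := by
      rcases Set.mem_uIcc.mp hs with h | h
      · exact h.2.trans (le_max_right a b)
      · exact h.2.trans (le_max_left a b)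
    exact le_trans (hM _ ⟨le_max_right _ _, max_le_max hs2 le_rfl⟩) (le_max_left _ _)
  -- integrability of the basic pieces
  have bx := bnd x hx
  have bz := bnd z hz
  set hbar : ℝ → ℝ := fun s => c * max (xb s) 0 - g (max (xb s) 0) with hhbar
  set psib : ℝ → ℝ := fun s => hbar s - c * (xb s - zb s) with hpsib
  have hbarm : Measurable hbar :=
    (measurable_const.mul (hxbm.max measurable_const)).sub (hg'c.measurable.comp hxbm)
  have psibm : Measurable psib := hbarm.sub (measurable_const.mul (hxbm.sub hzbm))
  have intxpos : ∀ a b : ℝ, IntervalIntegrable (fun s => max (xb s) 0) volume a b := by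
    intro a b
    obtain ⟨M, hM0, hM⟩ := bx a b
    refine II_of_bdd (hxbm.max measurable_const) (M := M) (fun s hs => ?_)
    rw [abs_of_nonneg (le_max_right _ _)]
    exact max_le ((le_abs_self _).trans (hM s hs)) hM0
  have intxneg : ∀ a b : ℝ, IntervalIntegrable (fun s => max (-(xb s)) 0) volume a b := by
    intro a b
    obtain ⟨M, hM0, hM⟩ := bx a b
    refine II_of_bdd (hxbm.neg.max measurable_const) (M := M) (fun s hs => ?_)
    rw [abs_of_nonneg (le_max_right _ _)]
    exact max_le ((neg_le_abs _).trans (hM s hs)) hM0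
  have intgx : ∀ a b : ℝ, IntervalIntegrable (fun s => g (max (xb s) 0)) volume a b := by
    intro a b
    obtain ⟨M, hM0, hM⟩ := bx a b
    refine II_of_bdd (hg'c.measurable.comp hxbm) (M := K * M) (fun s hs => ?_)
    exact (hg'b (xb s)).trans (mul_le_mul_of_nonneg_left (hM s hs) K.2)
  have intzb : ∀ a b : ℝ, IntervalIntegrable zb volume a b := by
    intro a b
    obtain ⟨M, hM0, hM⟩ := bz a b
    exact II_of_bdd hzbm (M := M) hM
  have intxb : ∀ a b : ℝ, IntervalIntegrable xb volume a b := by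
    intro a b
    obtain ⟨M, hM0, hM⟩ := bx a b
    exact II_of_bdd hxbm (M := M) hM
  have inthbar : ∀ a b : ℝ, IntervalIntegrable hbar volume a b := fun a b =>
    ((intxpos a b).const_mul c).sub (intgx a b)
  have intpsib : ∀ a b : ℝ, IntervalIntegrable psib volume a b := fun a b =>
    (inthbar a b).sub (((intxb a b).sub (intzb a b)).const_mul c)
  -- primitives
  set w : ℝ → ℝ := fun t => ∫ s in (0:ℝ)..t, psib s with hw
  set H : ℝ → ℝ := fun t => ∫ s in (0:ℝ)..t, hbar s with hH
  have hwc : Continuous w := intervalIntegral.continuous_primitive intpsib 0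
  have hHc : Continuous H := intervalIntegral.continuous_primitive inthbar 0
  set W : ℝ → ℝ := fun t => ∫ s in (0:ℝ)..t, w s with hW
  -- pointwise identity for psib
  have psib_eq : ∀ s : ℝ, psib s
      = c * max (-(xb s)) 0 - g (max (xb s) 0) + c * zb s := by
    intro s
    have hmx : max (-(xb s)) 0 = max (xb s) 0 - xb s := by
      rcases le_total (xb s) 0 with h | h
      · rw [max_eq_left (neg_nonneg.mpr h), max_eq_right h]; ring
      · rw [max_eq_right (neg_nonpos.mpr h), max_eq_left h]; ring
    simp only [hpsib, hhbar, hmx]; ring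
  -- Claim 1 : x t - z t = w t for t ≥ 0
  have claim1 : ∀ t, 0 ≤ t → x t - z t = w t := by
    intro t ht
    have heqx : ∀ s ∈ Set.uIcc (0:ℝ) t, xb s = x s := by
      intro s hs
      rw [Set.uIcc_of_le ht] at hs
      simp [hxb, max_eq_left hs.1]
    have heqz : ∀ s ∈ Set.uIcc (0:ℝ) t, zb s = z s := by
      intro s hs
      rw [Set.uIcc_of_le ht] at hs
      simp [hzb, max_eq_left hs.1]
    have e1 : (∫ s in (0:ℝ)..t, max (-(x s)) 0) = ∫ s in (0:ℝ)..t, max (-(xb s)) 0 :=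
      intervalIntegral.integral_congr (fun s hs => by rw [heqx s hs])
    have e2 : (∫ s in (0:ℝ)..t, g (max (x s) 0)) = ∫ s in (0:ℝ)..t, g (max (xb s) 0) :=
      intervalIntegral.integral_congr (fun s hs => by rw [heqx s hs])
    have e3 : (∫ s in (0:ℝ)..t, z s) = ∫ s in (0:ℝ)..t, zb s :=
      intervalIntegral.integral_congr (fun s hs => by rw [heqz s hs])
    have e4 : w t = c * (∫ s in (0:ℝ)..t, max (-(xb s)) 0)
        - (∫ s in (0:ℝ)..t, g (max (xb s) 0)) + c * ∫ s in (0:ℝ)..t, zb s := by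
      have l1 : w t = ∫ s in (0:ℝ)..t,
          ((c * max (-(xb s)) 0 - g (max (xb s) 0)) + c * zb s) := by
        rw [hw]
        exact intervalIntegral.integral_congr (fun s _ => by rw [psib_eq s])
      rw [l1, intervalIntegral.integral_add
          (((intxneg 0 t).const_mul c).sub (intgx 0 t)) ((intzb 0 t).const_mul c),
        intervalIntegral.integral_sub ((intxneg 0 t).const_mul c) (intgx 0 t),
        intervalIntegral.integral_const_mul, intervalIntegral.integral_const_mul]
    have hx1 := hxeq t ht
    have hz1 := hzeq t ht
    rw [e1, e2] at hx1
    rw [e3] at hz1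
    rw [e4]; rw [hx1, hz1]; ring
  -- H is monotone with H 0 = 0
  have hbar_nonneg : ∀ s, 0 ≤ hbar s := by
    intro s
    have := hg_le (max (xb s) 0) (le_max_right _ _)
    simp only [hhbar]; linarith
  have hH0 : H 0 = 0 := intervalIntegral.integral_same
  have Hmono : Monotone H := by
    intro a b hab
    have hsplit : H a + (∫ s in a..b, hbar s) = H b :=
      intervalIntegral.integral_add_adjacent_intervals (inthbar 0 a) (inthbar a b)
    have hpos : 0 ≤ ∫ s in a..b, hbar s :=
      intervalIntegral.integral_nonneg hab (fun u _ => hbar_nonneg u)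
    linarith
  -- Claim 3 : w t = H t - c * W t for t ≥ 0
  have intw : ∀ a b : ℝ, IntervalIntegrable w volume a b := fun a b =>
    hwc.intervalIntegrable a b
  have claim3 : ∀ t, 0 ≤ t → w t = H t - c * W t := by
    intro t ht
    have l1 : w t = ∫ s in (0:ℝ)..t, (hbar s - c * w s) := by
      rw [hw]
      refine intervalIntegral.integral_congr (fun s hs => ?_)
      rw [Set.uIcc_of_le ht] at hs
      have hxz : xb s - zb s = w s := by
        have h1 : xb s = x s := by simp [hxb, max_eq_left hs.1]
        have h2 : zb s = z s := by simp [hzb, max_eq_left hs.1]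
        rw [h1, h2]; exact claim1 s hs.1
      simp only [hpsib, hxz]; rfl
    rw [l1, intervalIntegral.integral_sub (inthbar 0 t) ((intw 0 t).const_mul c),
      intervalIntegral.integral_const_mul]
  -- derivative of W
  have hWd : ∀ t : ℝ, HasDerivAt W (w t) t := by
    intro t
    exact intervalIntegral.integral_hasDerivAt_right (intw 0 t)
      (hwc.stronglyMeasurableAtFilter volume (nhds t)) hwc.continuousAt
  -- derivative of exp (c*t)
  have hExpd : ∀ t : ℝ, HasDerivAt (fun u => Real.exp (c*u)) (c * Real.exp (c*t)) t := by
    intro t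
    have h1 : HasDerivAt (fun u : ℝ => c * u) c t := by
      simpa using (hasDerivAt_id t).const_mul c
    simpa [mul_comm, Function.comp_def] using (Real.hasDerivAt_exp (c*t)).comp t h1
  have hFd : ∀ t : ℝ, HasDerivAt (fun u => Real.exp (c*u) * W u)
      (Real.exp (c*t) * (c * W t + w t)) t := by
    intro t
    have := (hExpd t).fun_mul (hWd t)
    convert this using 1 <;> first | rfl | ring
  -- now fix T ≥ 0
  intro T hT
  have hFTC := intervalIntegral.integral_eq_sub_of_hasDerivAt
    (f := fun u => Real.exp (c*u) * W u)
    (f' := fun t => Real.exp (c*t) * (c * W t + w t))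
    (fun t _ => hFd t)
    ((Continuous.mul (Real.continuous_exp.comp (continuous_const.mul continuous_id))
      ((continuous_const.mul (intervalIntegral.continuous_primitive intw 0)).add hwc)).intervalIntegrable 0 T)
  have hW0 : W 0 = 0 := intervalIntegral.integral_same
  have key2 : (∫ t in (0:ℝ)..T, Real.exp (c*t) * H t) = Real.exp (c*T) * W T := by
    have e5 : (∫ t in (0:ℝ)..T, Real.exp (c*t) * (c * W t + w t))
        = ∫ t in (0:ℝ)..T, Real.exp (c*t) * H t := by
      refine intervalIntegral.integral_congr (fun t ht => ?_)
      rw [Set.uIcc_of_le hT] at ht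
      rw [claim3 t ht.1]; ring
    rw [← e5, hFTC]; simp only [mul_zero, Real.exp_zero, hW0]; ring
  -- the exponential integral
  have hExpInt : (∫ t in (0:ℝ)..T, Real.exp (c*t))
      = (Real.exp (c*T) - 1) / c := by
    have := intervalIntegral.integral_eq_sub_of_hasDerivAt
      (f := fun u => Real.exp (c*u) / c)
      (f' := fun t => Real.exp (c*t))
      (fun t _ => by simpa [mul_div_assoc, mul_div_cancel_left₀ _ (ne_of_gt hc)]
        using (hExpd t).div_const c)
      ((Real.continuous_exp.comp (continuous_const.mul continuous_id)).intervalIntegrable 0 T)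
    rw [this]; simp only [mul_zero, Real.exp_zero]; ring
  -- the bound
  have hHT : 0 ≤ H T := hH0 ▸ Hmono hT
  have hbound : (∫ t in (0:ℝ)..T, Real.exp (c*t) * H t)
      ≤ H T * ((Real.exp (c*T) - 1) / c) := by
    have h1 : (∫ t in (0:ℝ)..T, Real.exp (c*t) * H t)
        ≤ ∫ t in (0:ℝ)..T, Real.exp (c*t) * H T := by
      refine intervalIntegral.integral_mono_on hT
        ((Continuous.mul (Real.continuous_exp.comp (continuous_const.mul continuous_id)) hHc).intervalIntegrable 0 T)
        (((Real.continuous_exp.comp (continuous_const.mul continuous_id)).mul continuous_const).intervalIntegrable 0 T)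
        (fun t ht => mul_le_mul_of_nonneg_left (Hmono ht.2) (Real.exp_nonneg _))
    have h2 : (∫ t in (0:ℝ)..T, Real.exp (c*t) * H T)
        = H T * ((Real.exp (c*T) - 1) / c) := by
      rw [intervalIntegral.integral_mul_const, hExpInt]; ring
    linarith
  -- final arithmetic
  have hE : (0:ℝ) < Real.exp (c*T) := Real.exp_pos _
  have h5 : Real.exp (c*T) * (c * W T) ≤ H T * (Real.exp (c*T) - 1) := by
    have := key2 ▸ hbound
    calc Real.exp (c*T) * (c * W T) = c * (Real.exp (c*T) * W T) := by ring
    _ ≤ c * (H T * ((Real.exp (c*T) - 1) / c)) := by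
        rw [← key2]; exact mul_le_mul_of_nonneg_left hbound hc.le
    _ = H T * (Real.exp (c*T) - 1) := by field_simp
  have h6 : c * W T ≤ H T := by nlinarith
  have h7 : 0 ≤ w T := by
    rw [claim3 T hT]; linarith
  have := claim1 T hT
  linarith
end

section
/- Let c > 0, let y : [0,∞) → ℝ be càdlàg, and let z : [0,∞) → ℝ be the unique càdlàg solution of z(t) = y(t) − c ∫_0^t z(s) ds. Then for all t > 0 and all δ with 0 < δ < t, z(t) ≥ y(t) e^{−ct} − sup_{s ∈ [t−δ, t]} |y(t) − y(s)| − 2 e^{−cδ} · sup_{s ∈ [0, t]} |y(s)|. -/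
open Filter MeasureTheory

namespace Stmt5Aux

/-- A function right-continuous at every point of `ℝ` is measurable. -/
lemma measurable_of_rightCont {f : ℝ → ℝ}
    (hf : ∀ t : ℝ, ContinuousWithinAt f (Set.Ici t) t) : Measurable f := by
  have hmeas : ∀ n : ℕ, Measurable (fun s : ℝ => f ((⌈s * ((n : ℝ) + 1)⌉ : ℤ) / ((n : ℝ) + 1))) := by
    intro n
    have h1 : Measurable fun s : ℝ => (⌈s * ((n : ℝ) + 1)⌉ : ℤ) :=
      Int.measurable_ceil.comp (measurable_id.mul_const _)
    exact (measurable_from_top (f := fun k : ℤ => f ((k : ℝ) / ((n : ℝ) + 1)))).comp h1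
  apply measurable_of_tendsto_metrizable hmeas
  rw [tendsto_pi_nhds]
  intro s
  have hpos : ∀ n : ℕ, (0 : ℝ) < (n : ℝ) + 1 := fun n => by positivity
  have hle : ∀ n : ℕ, s ≤ ((⌈s * ((n : ℝ) + 1)⌉ : ℤ) : ℝ) / ((n : ℝ) + 1) := by
    intro n
    rw [le_div_iff₀ (hpos n)]
    exact Int.le_ceil _
  have hub : ∀ n : ℕ, ((⌈s * ((n : ℝ) + 1)⌉ : ℤ) : ℝ) / ((n : ℝ) + 1) ≤ s + 1 / ((n : ℝ) + 1) := by
    intro n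
    rw [div_le_iff₀ (hpos n)]
    have := (Int.ceil_lt_add_one (s * ((n : ℝ) + 1))).le
    calc ((⌈s * ((n : ℝ) + 1)⌉ : ℤ) : ℝ) ≤ s * ((n : ℝ) + 1) + 1 := this
      _ = (s + 1 / ((n : ℝ) + 1)) * ((n : ℝ) + 1) := by field_simp
  have h1 : Tendsto (fun n : ℕ => ((⌈s * ((n : ℝ) + 1)⌉ : ℤ) : ℝ) / ((n : ℝ) + 1)) atTop
      (nhdsWithin s (Set.Ici s)) := by
    apply tendsto_nhdsWithin_of_tendsto_nhds_of_eventually_within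
    · have hlim : Tendsto (fun n : ℕ => s + 1 / ((n : ℝ) + 1)) atTop (nhds s) := by
        have := tendsto_one_div_add_atTop_nhds_zero_nat (𝕜 := ℝ)
        have := tendsto_const_nhds (x := s) (f := atTop (α := ℕ)) |>.add this
        simpa using this
      exact tendsto_of_tendsto_of_tendsto_of_le_of_le tendsto_const_nhds hlim hle hub
    · filter_upwards with n
      exact hle n
  exact ((hf s).tendsto).comp h1

/-- The right-continuous extension `s ↦ f (max s 0)` of a càdlàg function. -/
lemma rightCont_max {f : ℝ → ℝ} (hf : Cadlag f) (t : ℝ) :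
    ContinuousWithinAt (fun s => f (max s 0)) (Set.Ici t) t := by
  rcases lt_or_ge t 0 with ht | ht
  · have heq : (fun s : ℝ => f (max s 0)) =ᶠ[nhds t] fun _ => f 0 := by
      filter_upwards [Iio_mem_nhds ht] with x hx
      rw [max_eq_right hx.le]
    exact ((continuousAt_congr heq).2 continuousAt_const).continuousWithinAt
  · apply (hf.1 t ht).congr
    · intro x hx
      rw [max_eq_left (ht.trans hx)]
    · rw [max_eq_left ht]

lemma measurable_max {f : ℝ → ℝ} (hf : Cadlag f) :
    Measurable (fun s => f (max s 0)) :=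
  measurable_of_rightCont (rightCont_max hf)

/-- A càdlàg function is bounded on compact subsets of `[0,∞)`. -/
lemma cadlag_bounded {f : ℝ → ℝ} (hf : Cadlag f) {a b : ℝ} (ha : 0 ≤ a) :
    ∃ M : ℝ, ∀ s ∈ Set.Icc a b, |f s| ≤ M := by
  have H : ∀ x ∈ Set.Icc a b, ∃ u ∈ nhdsWithin x (Set.Icc a b),
      ∃ M : ℝ, ∀ y ∈ u, |f y| ≤ M := by
    intro x hx
    have hx0 : 0 ≤ x := ha.trans hx.1
    -- right side bound
    have hR : ∀ᶠ v in nhdsWithin x (Set.Ici x), |f v| ≤ |f x| + 1 := by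
      have h := (hf.1 x hx0).tendsto
      have h2 : ∀ᶠ v in nhdsWithin x (Set.Ici x), f v ∈ Metric.ball (f x) 1 :=
        h (Metric.ball_mem_nhds _ one_pos)
      filter_upwards [h2] with v hv
      have h3 : |f v - f x| < 1 := by simpa [Real.dist_eq] using hv
      calc |f v| = |f v - f x + f x| := by ring_nf
        _ ≤ |f v - f x| + |f x| := abs_add_le _ _
        _ ≤ |f x| + 1 := by linarith
    -- left side bound (with membership hypothesis)
    have hL : ∃ ML : ℝ, ∀ᶠ v in nhdsWithin x (Set.Iio x),
        v ∈ Set.Icc a b → |f v| ≤ ML := by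
      rcases eq_or_lt_of_le hx0 with h0 | h0
      · refine ⟨0, ?_⟩
        filter_upwards [self_mem_nhdsWithin] with v hv hmem
        exact absurd (ha.trans hmem.1) (not_le.2 (h0 ▸ hv))
      · obtain ⟨l, hl⟩ := hf.2 x h0
        have h2 : ∀ᶠ v in nhdsWithin x (Set.Iio x), f v ∈ Metric.ball l 1 :=
          hl (Metric.ball_mem_nhds _ one_pos)
        refine ⟨|l| + 1, ?_⟩
        filter_upwards [h2] with v hv _
        have h3 : |f v - l| < 1 := by simpa [Real.dist_eq] using hv
        calc |f v| = |f v - l + l| := by ring_nf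
          _ ≤ |f v - l| + |l| := abs_add_le _ _
          _ ≤ |l| + 1 := by linarith
    obtain ⟨ML, hML⟩ := hL
    set M := max (|f x| + 1) ML with hM
    have hnhds : ∀ᶠ v in nhds x, v ∈ Set.Icc a b → |f v| ≤ M := by
      rw [← nhdsLT_sup_nhdsGE x, eventually_sup]
      constructor
      · filter_upwards [hML] with v hv hmem
        exact (hv hmem).trans (le_max_right _ _)
      · filter_upwards [hR] with v hv _
        exact hv.trans (le_max_left _ _)
    refine ⟨{v | v ∈ Set.Icc a b → |f v| ≤ M} ∩ Set.Icc a b, ?_, M, ?_⟩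
    · exact Filter.inter_mem (mem_nhdsWithin_of_mem_nhds hnhds) self_mem_nhdsWithin
    · rintro y ⟨hy1, hy2⟩
      exact hy1 hy2
  exact IsCompact.induction_on (isCompact_Icc (a := a) (b := b))
    (p := fun S => ∃ M : ℝ, ∀ y ∈ S, |f y| ≤ M)
    ⟨0, fun y hy => absurd hy (Set.notMem_empty y)⟩
    (fun s t hst ⟨M, hM⟩ => ⟨M, fun y hy => hM y (hst hy)⟩)
    (fun s t ⟨M, hM⟩ ⟨N, hN⟩ => ⟨max M N, fun y hy => hy.elim
      (fun h => (hM y h).trans (le_max_left _ _))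
      (fun h => (hN y h).trans (le_max_right _ _))⟩)
    H

lemma aesm_restrict {f : ℝ → ℝ} (hf : Cadlag f) {s : Set ℝ} (hs : MeasurableSet s)
    (hpos : ∀ x ∈ s, 0 ≤ x) :
    AEStronglyMeasurable f (volume.restrict s) := by
  refine ((measurable_max hf).aestronglyMeasurable.restrict).congr ?_
  apply ae_restrict_of_forall_mem hs
  intro x hx
  exact congrArg f (max_eq_left (hpos x hx))

lemma cadlag_intervalIntegrable {f : ℝ → ℝ} (hf : Cadlag f) {a b : ℝ}
    (ha : 0 ≤ a) (hab : a ≤ b) : IntervalIntegrable f volume a b := by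
  obtain ⟨M, hM⟩ := cadlag_bounded hf (a := a) (b := b) ha
  rw [intervalIntegrable_iff_integrableOn_Ioc_of_le hab]
  refine ⟨aesm_restrict hf measurableSet_Ioc (fun x hx => ha.trans hx.1.le), ?_⟩
  apply MeasureTheory.HasFiniteIntegral.of_bounded (C := M)
  apply ae_restrict_of_forall_mem measurableSet_Ioc
  intro x hx
  rw [Real.norm_eq_abs]
  exact hM x ⟨hx.1.le, hx.2⟩

lemma exp_mul_cadlag_intervalIntegrable {f : ℝ → ℝ} (hf : Cadlag f) (c : ℝ) {a b : ℝ}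
    (ha : 0 ≤ a) (hab : a ≤ b) :
    IntervalIntegrable (fun s => Real.exp (c * s) * f s) volume a b := by
  obtain ⟨M, hM⟩ := cadlag_bounded hf (a := a) (b := b) ha
  rw [intervalIntegrable_iff_integrableOn_Ioc_of_le hab]
  refine ⟨((Real.continuous_exp.comp (continuous_const.mul continuous_id)).aestronglyMeasurable.restrict).mul
      (aesm_restrict hf measurableSet_Ioc (fun x hx => ha.trans hx.1.le)), ?_⟩
  apply MeasureTheory.HasFiniteIntegral.of_bounded
    (C := Real.exp (|c| * (|a| + |b|)) * |M|)
  apply ae_restrict_of_forall_mem measurableSet_Ioc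
  intro x hx
  rw [Real.norm_eq_abs, abs_mul, Real.abs_exp]
  have h1 : |f x| ≤ |M| := (hM x ⟨hx.1.le, hx.2⟩).trans (le_abs_self M)
  have h2 : Real.exp (c * x) ≤ Real.exp (|c| * (|a| + |b|)) := by
    apply Real.exp_le_exp.2
    have hx0 : 0 ≤ x := ha.trans hx.1.le
    have hxb : x ≤ b := hx.2
    calc c * x ≤ |c * x| := le_abs_self _
      _ = |c| * |x| := abs_mul _ _
      _ ≤ |c| * (|a| + |b|) := by
          apply mul_le_mul_of_nonneg_left _ (abs_nonneg c)
          rw [abs_of_nonneg hx0]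
          have : |b| ≤ |a| + |b| := le_add_of_nonneg_left (abs_nonneg a)
          linarith [le_abs_self b, abs_nonneg a]
  exact mul_le_mul h2 h1 (abs_nonneg _) (Real.exp_pos _).le

lemma integral_exp_mul {c : ℝ} (hc : c ≠ 0) (a b : ℝ) :
    ∫ s in a..b, Real.exp (c * s) = (Real.exp (c * b) - Real.exp (c * a)) / c := by
  rw [intervalIntegral.integral_comp_mul_left (fun u => Real.exp u) hc,
    integral_exp, smul_eq_mul]
  field_simp

lemma ode_solution {c : ℝ} {y z : ℝ → ℝ} (hy : Cadlag y) (hzc : Cadlag z)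
    (hz : ∀ t, 0 ≤ t → z t = y t - c * ∫ s in (0 : ℝ)..t, z s) {t : ℝ} (ht : 0 < t) :
    Real.exp (c * t) * (∫ s in (0 : ℝ)..t, z s)
      = ∫ s in (0 : ℝ)..t, Real.exp (c * s) * y s := by
  set F : ℝ → ℝ := fun u => Real.exp (c * u) * (∫ s in (0 : ℝ)..u, z s)
      - ∫ s in (0 : ℝ)..u, Real.exp (c * s) * y s with hF
  have hzint : ∀ u : ℝ, 0 ≤ u → IntervalIntegrable z volume 0 u :=
    fun u hu => cadlag_intervalIntegrable hzc le_rfl hu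
  have hyint : ∀ u : ℝ, 0 ≤ u →
      IntervalIntegrable (fun s => Real.exp (c * s) * y s) volume 0 u :=
    fun u hu => exp_mul_cadlag_intervalIntegrable hy c le_rfl hu
  have hexpc : Continuous fun u : ℝ => Real.exp (c * u) :=
    Real.continuous_exp.comp (continuous_const.mul continuous_id)
  have hcont : ContinuousOn F (Set.Icc 0 t) := by
    have hIcc : Set.Icc (0 : ℝ) t = Set.uIcc (0 : ℝ) t := (Set.uIcc_of_le ht.le).symm
    rw [hIcc]
    apply ContinuousOn.sub
    · exact hexpc.continuousOn.mul
        (intervalIntegral.continuousOn_primitive_interval' (hzint t ht.le) Set.left_mem_uIcc)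
    · exact intervalIntegral.continuousOn_primitive_interval' (hyint t ht.le) Set.left_mem_uIcc
  have hderiv : ∀ x ∈ Set.Ico 0 t, HasDerivWithinAt F 0 (Set.Ici x) x := by
    intro x hx
    have hx0 : (0 : ℝ) ≤ x := hx.1
    have haesmz : StronglyMeasurableAtFilter z (nhdsWithin x (Set.Ioi x)) volume :=
      ⟨Set.Ioi x, self_mem_nhdsWithin,
        aesm_restrict hzc measurableSet_Ioi (fun u hu => hx0.trans (le_of_lt hu))⟩
    have haesmy : StronglyMeasurableAtFilter (fun s => Real.exp (c * s) * y s)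
        (nhdsWithin x (Set.Ioi x)) volume :=
      ⟨Set.Ioi x, self_mem_nhdsWithin,
        (hexpc.aestronglyMeasurable.restrict).mul
          (aesm_restrict hy measurableSet_Ioi (fun u hu => hx0.trans (le_of_lt hu)))⟩
    have h1 : HasDerivWithinAt (fun u => ∫ s in (0 : ℝ)..u, z s) (z x) (Set.Ici x) x :=
      intervalIntegral.integral_hasDerivWithinAt_right (hzint x hx0) haesmz
        ((hzc.1 x hx0).mono Set.Ioi_subset_Ici_self)
    have h2 : HasDerivWithinAt (fun u => ∫ s in (0 : ℝ)..u, Real.exp (c * s) * y s)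
        (Real.exp (c * x) * y x) (Set.Ici x) x :=
      intervalIntegral.integral_hasDerivWithinAt_right (hyint x hx0) haesmy
        ((hexpc.continuousWithinAt).mul ((hy.1 x hx0).mono Set.Ioi_subset_Ici_self))
    have h3 : HasDerivAt (fun u : ℝ => Real.exp (c * u)) (Real.exp (c * x) * c) x := by
      have hid : HasDerivAt (fun u : ℝ => c * u) c x := by
        simpa using (hasDerivAt_id x).const_mul c
      exact hid.exp
    have h4 := ((h3.hasDerivWithinAt.mul h1).sub h2)
    refine h4.congr_deriv ?_
    have h5 := hz x hx0
    set I := ∫ s in (0 : ℝ)..x, z s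
    linear_combination (Real.exp (c * x)) * h5
  have hconst := constant_of_has_deriv_right_zero hcont hderiv t (Set.right_mem_Icc.2 ht.le)
  have hF0 : F 0 = 0 := by simp [hF]
  have hFt := hconst
  rw [hF0] at hFt
  have : Real.exp (c * t) * (∫ s in (0 : ℝ)..t, z s)
      - ∫ s in (0 : ℝ)..t, Real.exp (c * s) * y s = 0 := hFt
  linarith

lemma le_biSup_real {f : ℝ → ℝ} {s : Set ℝ} {B : ℝ} (hB : ∀ x ∈ s, f x ≤ B) {x : ℝ}
    (hx : x ∈ s) : f x ≤ ⨆ y ∈ s, f y := by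
  have h1 : f x = ⨆ _ : x ∈ s, f x := (ciSup_pos (f := fun _ : x ∈ s => f x) hx).symm
  rw [h1]
  apply le_ciSup (f := fun y => ⨆ _ : y ∈ s, f y)
  refine ⟨max B 0, ?_⟩
  rintro _ ⟨y, rfl⟩
  show (⨆ _ : y ∈ s, f y) ≤ B ⊔ 0
  by_cases hy : y ∈ s
  · rw [ciSup_pos (f := fun _ : y ∈ s => f y) hy]
    exact (hB y hy).trans (le_max_left _ _)
  · have he : IsEmpty (y ∈ s) := ⟨hy⟩
    rw [Real.iSup_of_isEmpty (fun _ : y ∈ s => f y)]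
    exact le_max_right _ _

end Stmt5Aux

open Stmt5Aux

/-- If `z` is the (unique) càdlàg solution of
`z(t) = y(t) − c ∫₀ᵗ z(s) ds`, then for all `0 < δ < t`,
`z(t) ≥ y(t)e^{−ct} − sup_{s∈[t−δ,t]} |y(t) − y(s)| − 2e^{−cδ} sup_{s∈[0,t]} |y(s)|`. -/
theorem stmt_5 (c : ℝ) (hc : 0 < c) (y : ℝ → ℝ) (hy : Cadlag y)
    (z : ℝ → ℝ) (hzc : Cadlag z)
    (hz : ∀ t, 0 ≤ t → z t = y t - c * ∫ s in (0 : ℝ)..t, z s) :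
    ∀ t, 0 < t → ∀ δ, 0 < δ → δ < t →
      y t * Real.exp (-(c * t)) - (⨆ s ∈ Set.Icc (t - δ) t, |y t - y s|)
        - 2 * Real.exp (-(c * δ)) * (⨆ s ∈ Set.Icc (0 : ℝ) t, |y s|) ≤ z t := by
  intro t ht δ hδ hδt
  have ht0 : (0 : ℝ) ≤ t := ht.le
  have htδ : (0 : ℝ) ≤ t - δ := by linarith
  set S₁ := ⨆ s ∈ Set.Icc (t - δ) t, |y t - y s| with hS₁
  set S₂ := ⨆ s ∈ Set.Icc (0 : ℝ) t, |y s| with hS₂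
  obtain ⟨M, hM⟩ := cadlag_bounded hy (a := (0 : ℝ)) (b := t) le_rfl
  have hbdd1 : BddAbove ((fun s => |y t - y s|) '' Set.Icc (t - δ) t) := by
    refine ⟨|y t| + M, ?_⟩
    rintro _ ⟨s, hs, rfl⟩
    have h := hM s ⟨htδ.trans hs.1, hs.2⟩
    calc |y t - y s| ≤ |y t| + |y s| := abs_sub _ _
      _ ≤ |y t| + M := by linarith
  have hbdd2 : BddAbove ((fun s => |y s|) '' Set.Icc (0 : ℝ) t) :=
    ⟨M, by rintro _ ⟨s, hs, rfl⟩; exact hM s hs⟩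
  have hS₁le : ∀ s ∈ Set.Icc (t - δ) t, |y t - y s| ≤ S₁ := by
    intro s hs
    refine le_biSup_real (f := fun u => |y t - y u|) (B := |y t| + M) ?_ hs
    intro x hx
    have h := hM x ⟨htδ.trans hx.1, hx.2⟩
    calc |y t - y x| ≤ |y t| + |y x| := abs_sub _ _
      _ ≤ |y t| + M := by linarith
  have hS₂le : ∀ s ∈ Set.Icc (0 : ℝ) t, |y s| ≤ S₂ := by
    intro s hs
    exact le_biSup_real (f := fun u => |y u|) (B := M) hM hs
  have hS₁0 : 0 ≤ S₁ := by
    have := hS₁le t ⟨by linarith, le_rfl⟩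
    have h0 : |y t - y t| = 0 := by simp
    linarith [abs_nonneg (y t - y t), h0 ▸ this]
  have hS₂0 : 0 ≤ S₂ := (abs_nonneg (y t)).trans (hS₂le t ⟨ht0, le_rfl⟩)
  have hyt : |y t| ≤ S₂ := hS₂le t ⟨ht0, le_rfl⟩
  -- notation
  set e1 := Real.exp (c * t) with he1
  set e2 := Real.exp (c * (t - δ)) with he2
  set p := Real.exp (-(c * t)) with hp
  set q := Real.exp (-(c * δ)) with hq
  have hpe1 : p * e1 = 1 := by rw [hp, he1, ← Real.exp_add]; simp
  have hpe2 : p * e2 = q := by rw [hp, he2, hq, ← Real.exp_add]; ring_nf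
  have hp0 : 0 < p := Real.exp_pos _
  have hq1 : q ≤ 1 := Real.exp_le_one_iff.2 (by nlinarith)
  have hpq : p ≤ q := Real.exp_le_exp.2 (by nlinarith)
  -- the explicit solution
  set A := ∫ s in (0 : ℝ)..t, Real.exp (c * s) * y s with hA
  set I := ∫ s in (0 : ℝ)..t, z s with hI
  have key : e1 * I = A := ode_solution hy hzc hz ht
  have hIeq : I = p * A := by linear_combination p * key - I * hpe1
  -- integrability
  have hint1 : IntervalIntegrable (fun s => Real.exp (c * s) * y s) volume 0 (t - δ) :=
    exp_mul_cadlag_intervalIntegrable hy c le_rfl htδ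
  have hint2 : IntervalIntegrable (fun s => Real.exp (c * s) * y s) volume (t - δ) t :=
    exp_mul_cadlag_intervalIntegrable hy c htδ (by linarith)
  have hexpc : Continuous fun u : ℝ => Real.exp (c * u) :=
    Real.continuous_exp.comp (continuous_const.mul continuous_id)
  have hAsum : (∫ s in (0 : ℝ)..(t - δ), Real.exp (c * s) * y s)
      + (∫ s in (t - δ)..t, Real.exp (c * s) * y s) = A :=
    intervalIntegral.integral_add_adjacent_intervals hint1 hint2
  -- bounds on the two pieces
  have hA1 : (∫ s in (0 : ℝ)..(t - δ), Real.exp (c * s) * y s)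
      ≤ (e2 - 1) / c * S₂ := by
    have hmono : (∫ s in (0 : ℝ)..(t - δ), Real.exp (c * s) * y s)
        ≤ ∫ s in (0 : ℝ)..(t - δ), Real.exp (c * s) * S₂ := by
      apply intervalIntegral.integral_mono_on htδ hint1
        ((hexpc.mul continuous_const).intervalIntegrable _ _)
      intro x hx
      have h1 : |y x| ≤ S₂ := hS₂le x ⟨hx.1, by linarith [hx.2]⟩
      have h2 : y x ≤ S₂ := (le_abs_self _).trans h1
      exact mul_le_mul_of_nonneg_left h2 (Real.exp_pos _).le
    have hval : (∫ s in (0 : ℝ)..(t - δ), Real.exp (c * s) * S₂)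
        = (e2 - 1) / c * S₂ := by
      rw [intervalIntegral.integral_mul_const, integral_exp_mul hc.ne', he2]
      norm_num
    linarith [hval ▸ hmono]
  have hA2 : (∫ s in (t - δ)..t, Real.exp (c * s) * y s)
      ≤ (e1 - e2) / c * (y t + S₁) := by
    have hmono : (∫ s in (t - δ)..t, Real.exp (c * s) * y s)
        ≤ ∫ s in (t - δ)..t, Real.exp (c * s) * (y t + S₁) := by
      apply intervalIntegral.integral_mono_on (by linarith) hint2
        ((hexpc.mul continuous_const).intervalIntegrable _ _)
      intro x hx
      have h1 : |y t - y x| ≤ S₁ := hS₁le x hx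
      have h2 : y x ≤ y t + S₁ := by
        have := abs_sub_comm (y t) (y x) ▸ h1
        have := le_abs_self (y x - y t)
        have h3 : |y x - y t| ≤ S₁ := by rwa [abs_sub_comm]
        linarith [le_abs_self (y x - y t)]
      exact mul_le_mul_of_nonneg_left h2 (Real.exp_pos _).le
    have hval : (∫ s in (t - δ)..t, Real.exp (c * s) * (y t + S₁))
        = (e1 - e2) / c * (y t + S₁) := by
      rw [intervalIntegral.integral_mul_const, integral_exp_mul hc.ne', he1, he2]
    linarith [hval ▸ hmono]
  -- multiply bounds by c
  have hcA : c * A ≤ (e2 - 1) * S₂ + (e1 - e2) * (y t + S₁) := by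
    have hb1 : c * ((e2 - 1) / c * S₂) = (e2 - 1) * S₂ := by
      field_simp
    have hb2 : c * ((e1 - e2) / c * (y t + S₁)) = (e1 - e2) * (y t + S₁) := by
      field_simp
    have hsum : A ≤ (e2 - 1) / c * S₂ + (e1 - e2) / c * (y t + S₁) := by
      linarith [hAsum, hA1, hA2]
    have := mul_le_mul_of_nonneg_left hsum hc.le
    rw [mul_add, hb1, hb2] at this
    exact this
  -- final computation
  have hzt : z t = y t - c * I := hz t ht0
  have hzt' : y t - p * (c * A) ≤ z t := by
    rw [hzt, hIeq]
    have : p * (c * A) = c * (p * A) := by ring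
    linarith [this]
  have hlow : y t - p * ((e2 - 1) * S₂ + (e1 - e2) * (y t + S₁)) ≤ y t - p * (c * A) := by
    have := mul_le_mul_of_nonneg_left hcA hp0.le
    linarith
  have heq : y t - p * ((e2 - 1) * S₂ + (e1 - e2) * (y t + S₁))
      = y t * q - S₁ * (1 - q) - S₂ * (q - p) := by
    linear_combination (-(y t + S₁)) * hpe1 + (y t + S₁ - S₂) * hpe2
  have hmain : y t * q - S₁ * (1 - q) - S₂ * (q - p) ≤ z t := by
    rw [← heq]; linarith
  have hya : -S₂ ≤ y t := by
    have := neg_abs_le (y t); linarith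
  nlinarith [mul_nonneg (sub_nonneg.2 hpq) (by linarith : (0 : ℝ) ≤ S₂ + y t),
    mul_nonneg hS₁0 (Real.exp_pos (-(c * δ))).le,
    mul_nonneg hS₂0 hp0.le, hmain]
end

section
/- Let T > 0, let (c_n) be a sequence of positive real numbers, and for each n let x_n : [0,T] → ℝ be càdlàg. Define ℓ_n(t) = c_n ∫_0^t (x_n(s))⁻ ds for t ∈ [0,T]. Suppose x_n converges uniformly on [0,T] to a continuous function x : [0,T] → ℝ with x ≥ 0, and ℓ_n converges pointwise on [0,T] to a right-continuous nondecreasing function ℓ : [0,T] → ℝ. Then ∫_{[0,T]} x dℓ = 0, where the integral is taken with respect to the Lebesgue–Stieltjes measure associated with ℓ. -/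
open Filter MeasureTheory

/-- A function `y : [0,T] → ℝ` (encoded on all of `ℝ`, with only its values on
`[0,T]` relevant) is càdlàg: right-continuous at every `t ∈ [0,T)` and with a
finite left limit at every `t ∈ (0,T]`. -/
def CadlagOn (y : ℝ → ℝ) (T : ℝ) : Prop :=
  (∀ t : ℝ, 0 ≤ t → t < T → ContinuousWithinAt y (Set.Ici t) t) ∧
  (∀ t : ℝ, 0 < t → t ≤ T → ∃ l : ℝ, Tendsto y (nhdsWithin t (Set.Iio t)) (nhds l))

private lemma aux_int (f : ℝ → ℝ) (a b : ℝ) (ha : 0 ≤ a) (hab : a ≤ b)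
    (hf : ∀ s ∈ Set.Icc a b, f s = 0) :
    ∫ s in (0:ℝ)..b, f s = ∫ s in (0:ℝ)..a, f s := by
  have heq : Set.EqOn f (fun _ => (0:ℝ)) (Set.uIcc a b) := by
    intro s hs
    exact hf s (by rwa [Set.uIcc_of_le hab] at hs)
  have hz : ∫ s in a..b, f s = 0 := by
    rw [intervalIntegral.integral_congr heq]; simp
  have hint2 : IntervalIntegrable f volume a b := by
    rw [intervalIntegrable_iff]
    refine integrableOn_zero.congr_fun ?_ measurableSet_uIoc
    intro s hs
    exact (hf s (Set.Ioc_subset_Icc_self (by rwa [Set.uIoc_of_le hab] at hs))).symm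
  by_cases h : IntervalIntegrable f volume 0 a
  · rw [← intervalIntegral.integral_add_adjacent_intervals h hint2, hz, add_zero]
  · rw [intervalIntegral.integral_undef h, intervalIntegral.integral_undef]
    intro h'
    exact h (h'.mono_set (by
      rw [Set.uIcc_of_le ha, Set.uIcc_of_le (ha.trans hab)]
      exact Set.Icc_subset_Icc_right hab))

private lemma key (T : ℝ) (c : ℕ → ℝ)
    (xs : ℕ → ℝ → ℝ) (els : ℕ → ℝ → ℝ)
    (hels : ∀ n t, t ∈ Set.Icc (0 : ℝ) T →
      els n t = c n * ∫ s in (0 : ℝ)..t, max (-(xs n s)) 0)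
    (x : ℝ → ℝ) (hx_cont : ContinuousOn x (Set.Icc 0 T))
    (hunif : TendstoUniformlyOn xs x atTop (Set.Icc 0 T))
    (el : StieltjesFunction ℝ)
    (hconv : ∀ t ∈ Set.Icc (0 : ℝ) T, Tendsto (fun n => els n t) atTop (nhds (el t)))
    (a b : ℝ) (ha : 0 ≤ a) (hab : a ≤ b) (hb : b ≤ T)
    (hpos : ∀ s ∈ Set.Icc a b, 0 < x s) :
    el b = el a := by
  have hsub : Set.Icc a b ⊆ Set.Icc (0:ℝ) T :=
    Set.Icc_subset_Icc ha hb
  -- minimum of x on [a,b]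
  obtain ⟨z, hz, hzmin⟩ := isCompact_Icc.exists_isMinOn (Set.nonempty_Icc.2 hab)
    (hx_cont.mono hsub)
  set m := x z with hm
  have hm_pos : 0 < m := hpos z hz
  -- eventually xs n > m/2 on [a,b]
  have hev : ∀ᶠ n in atTop, ∀ s ∈ Set.Icc (0:ℝ) T, dist (x s) (xs n s) < m / 2 :=
    (Metric.tendstoUniformlyOn_iff.1 hunif) (m / 2) (by positivity)
  have hev2 : ∀ᶠ n in atTop, els n b = els n a := by
    filter_upwards [hev] with n hn
    rw [hels n b (hsub (Set.right_mem_Icc.2 hab)), hels n a (hsub (Set.left_mem_Icc.2 hab))]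
    congr 1
    apply aux_int _ a b ha hab
    intro s hs
    have h1 : dist (x s) (xs n s) < m / 2 := hn s (hsub hs)
    have h2 : m ≤ x s := isMinOn_iff.1 hzmin s hs
    have : 0 < xs n s := by
      have := abs_lt.1 (by rwa [Real.dist_eq] at h1)
      linarith [this.1, this.2]
    simp [max_eq_right, neg_nonpos.2 this.le]
  exact tendsto_nhds_unique
    (hconv b (hsub (Set.right_mem_Icc.2 hab)))
    (((hconv a (hsub (Set.left_mem_Icc.2 hab))).congr' (hev2.mono fun n h => h.symm)))

/-- If `xₙ → x` uniformly on `[0,T]` with `x` continuous and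
nonnegative, and `ℓₙ(t) = cₙ ∫₀ᵗ (xₙ(s))⁻ ds` converges pointwise on `[0,T]` to a
right-continuous nondecreasing `ℓ` (encoded as a Stieltjes function, constant on
`(-∞,0]` so that its Lebesgue–Stieltjes measure puts no mass below or at `0`
coming from outside `[0,T]`), then `∫_{[0,T]} x dℓ = 0`. -/
theorem stmt_6 (T : ℝ) (hT : 0 < T)
    (c : ℕ → ℝ) (hc : ∀ n, 0 < c n)
    (xs : ℕ → ℝ → ℝ) (hxs : ∀ n, CadlagOn (xs n) T)
    (els : ℕ → ℝ → ℝ)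
    (hels : ∀ n t, t ∈ Set.Icc (0 : ℝ) T →
      els n t = c n * ∫ s in (0 : ℝ)..t, max (-(xs n s)) 0)
    (x : ℝ → ℝ) (hx_cont : ContinuousOn x (Set.Icc 0 T))
    (hx_nonneg : ∀ t ∈ Set.Icc (0 : ℝ) T, 0 ≤ x t)
    (hunif : TendstoUniformlyOn xs x atTop (Set.Icc 0 T))
    (el : StieltjesFunction ℝ)
    (hel0 : ∀ t, t ≤ (0 : ℝ) → el t = el 0)
    (hconv : ∀ t ∈ Set.Icc (0 : ℝ) T, Tendsto (fun n => els n t) atTop (nhds (el t))) :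
    ∫ t in Set.Icc (0 : ℝ) T, x t ∂el.measure = 0 := by
  have h0 : el.measure {0} = 0 := by
    rw [StieltjesFunction.measure_singleton]
    have hl : Function.leftLim el 0 = el 0 := by
      apply leftLim_eq_of_tendsto
      refine Tendsto.congr' ?_ tendsto_const_nhds
      filter_upwards [self_mem_nhdsWithin] with t ht
      exact (hel0 t (le_of_lt ht)).symm
    rw [hl]; simp
  set S : Set ℝ := {t | x t ≠ 0} ∩ Set.Icc 0 T with hS
  have hSnull : el.measure S = 0 := by
    apply measure_null_of_locally_null
    intro t ht
    obtain ⟨ht1, ht2⟩ := ht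
    have hxt : 0 < x t := lt_of_le_of_ne (hx_nonneg t ht2) (Ne.symm ht1)
    have hmem : x ⁻¹' Set.Ioi 0 ∈ nhdsWithin t (Set.Icc 0 T) :=
      hx_cont t ht2 (Ioi_mem_nhds hxt)
    rw [Metric.mem_nhdsWithin_iff] at hmem
    obtain ⟨δ, hδ, hball⟩ := hmem
    set a : ℝ := max (t - δ/2) 0 with hadef
    set b : ℝ := min (t + δ/2) T with hbdef
    have hat : a ≤ t := max_le (by linarith) ht2.1
    have htb : t ≤ b := le_min (by linarith) ht2.2
    have ha0 : 0 ≤ a := le_max_right _ _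
    have hbT : b ≤ T := min_le_right _ _
    have hpos : ∀ s ∈ Set.Icc a b, 0 < x s := by
      intro s hs
      have h1 : t - δ/2 ≤ s := le_trans (le_max_left _ _) hs.1
      have h2 : s ≤ t + δ/2 := le_trans hs.2 (min_le_left _ _)
      refine hball ⟨?_, ha0.trans hs.1, hs.2.trans hbT⟩
      rw [Metric.mem_ball, Real.dist_eq, abs_lt]
      constructor <;> linarith
    have hel_eq : el b = el a :=
      key T c xs els hels x hx_cont hunif el hconv a b ha0 (hat.trans htb) hbT hpos
    have hIoc : el.measure (Set.Ioc a b) = 0 := by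
      rw [StieltjesFunction.measure_Ioc, hel_eq]; simp
    refine ⟨S ∩ Metric.ball t (δ/2),
      inter_mem_nhdsWithin S (Metric.ball_mem_nhds t (by positivity)), ?_⟩
    refine measure_mono_null (fun s hs => ?_) (measure_union_null h0 hIoc)
    obtain ⟨⟨hs1, hs2⟩, hs3⟩ := hs
    rw [Metric.mem_ball, Real.dist_eq, abs_lt] at hs3
    rcases eq_or_ne s 0 with rfl | hs0
    · exact Set.mem_union_left _ rfl
    · refine Set.mem_union_right _ ⟨?_, ?_⟩
      · exact max_lt (by linarith [hs3.1]) (lt_of_le_of_ne hs2.1 (Ne.symm hs0))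
      · exact le_min (by linarith [hs3.2]) hs2.2
  have hae : x =ᵐ[el.measure.restrict (Set.Icc 0 T)] fun _ => (0:ℝ) := by
    rw [Filter.EventuallyEq, ae_iff]
    rw [Measure.restrict_apply' measurableSet_Icc]
    exact hSnull
  rw [integral_congr_ae hae]
  simp
end
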